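/- arXiv:math/0311049 — 3 statements merged into one kernel-verified Lean document; each statement's English description precedes it below -/
import Mathlib

section
/- Let V : ℝ → ℝ be bounded and continuous, E real, a > 0, and let u, v be solutions of −w″ + Vw = Ew on [0,a] whose Wronskian u′(x)v(x) − u(x)v′(x) is a positive constant c > 0. Assume u(0) = 0 (so v(0) ≠ 0; assume v(0) > 0). Then (v(x), u(x)) ≠ (0,0) for all x ∈ [0,a], and if θ : [0,a] → ℝ is continuous with θ(0) = 0 and (v(x), u(x)) = r(x)(cos θ(x), sin θ(x)) with r(x) > 0, then whenever u has exactly m zeros in (0,a), one has θ(a) ∈ (mπ, (m+1)π]. -/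
open Set Real Filter

/-- Near a simple zero, a differentiable function has the sign of `d * (x - x₀)`. -/
private lemma slope_sign {u : ℝ → ℝ} {x₀ d : ℝ} (h : HasDerivAt u d x₀) (hd : d ≠ 0)
    (hu0 : u x₀ = 0) :
    ∃ ε > 0, ∀ x, x ≠ x₀ → |x - x₀| < ε → 0 < u x * (x - x₀) * d := by
  have hs : Tendsto (slope u x₀) (nhdsWithin x₀ {x₀}ᶜ) (nhds d) :=
    hasDerivAt_iff_tendsto_slope.mp h
  have hev : {x | |slope u x₀ x - d| < |d|} ∈ nhdsWithin x₀ {x₀}ᶜ := by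
    have hball : Metric.ball d |d| ∈ nhds d := Metric.ball_mem_nhds d (abs_pos.mpr hd)
    filter_upwards [hs hball] with x hx
    simpa [Metric.mem_ball, Real.dist_eq] using hx
  rw [Metric.mem_nhdsWithin_iff] at hev
  obtain ⟨ε, hε, hball⟩ := hev
  refine ⟨ε, hε, fun x hx hxe => ?_⟩
  have h1 : |slope u x₀ x - d| < |d| :=
    hball ⟨by simpa [Metric.mem_ball, Real.dist_eq] using hxe, hx⟩
  have hxx : x - x₀ ≠ 0 := sub_ne_zero.mpr hx
  have hsl : u x = slope u x₀ x * (x - x₀) := by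
    rw [slope_def_field, hu0, sub_zero]; field_simp
  have hsd : 0 < slope u x₀ x * d := by
    rcases abs_sub_lt_iff.mp h1 with ⟨h2, h3⟩
    rcases hd.lt_or_gt with h4 | h4
    · rw [abs_of_neg h4] at h2 h3; nlinarith
    · rw [abs_of_pos h4] at h2 h3; nlinarith
  rw [hsl]
  have hsq : 0 < (x - x₀) ^ 2 := by positivity
  nlinarith

/-- Claim A: θ crosses the level `k π` strictly upward at each zero of `u`. -/
private lemma claimA (a : ℝ) (u v θ : ℝ → ℝ) (c : ℝ) (hc : 0 < c)
    (hud : Differentiable ℝ u)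
    (hW : ∀ x ∈ Icc 0 a, deriv u x * v x - u x * deriv v x = c)
    (hθc : ContinuousOn θ (Icc 0 a))
    (hr : ∀ x ∈ Icc 0 a, 0 < Real.sqrt ((v x) ^ 2 + (u x) ^ 2))
    (hcos : ∀ x ∈ Icc 0 a, v x = Real.sqrt ((v x) ^ 2 + (u x) ^ 2) * Real.cos (θ x))
    (hsin : ∀ x ∈ Icc 0 a, u x = Real.sqrt ((v x) ^ 2 + (u x) ^ 2) * Real.sin (θ x))
    (x₀ : ℝ) (hx₀ : x₀ ∈ Icc 0 a) (hux₀ : u x₀ = 0) (k : ℤ) (hk : θ x₀ = k * π) :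
    ∃ ε > 0, ∀ x ∈ Icc 0 a, x ≠ x₀ → |x - x₀| < ε →
      ((x₀ < x → (k : ℝ) * π < θ x) ∧ (x < x₀ → θ x < (k : ℝ) * π)) := by
  obtain ⟨d, hd_def⟩ : ∃ d, deriv u x₀ = d := ⟨_, rfl⟩
  have hder : HasDerivAt u d x₀ := hd_def ▸ (hud x₀).hasDerivAt
  have hWx := hW x₀ hx₀
  rw [hux₀, zero_mul, sub_zero, hd_def] at hWx
  have hd0 : d ≠ 0 := by
    intro h
    rw [h, zero_mul] at hWx
    linarith
  obtain ⟨e, he_def⟩ : ∃ e : ℝ, (-1 : ℝ) ^ k = e := ⟨_, rfl⟩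
  have he : e * e = 1 := by rw [← he_def, ← mul_zpow]; norm_num
  have hck : Real.cos (θ x₀) = e := by
    rw [hk, ← he_def]; simpa using Real.cos_int_mul_pi_sub 0 k
  obtain ⟨r₀, hr₀_def⟩ : ∃ r₀, Real.sqrt ((v x₀) ^ 2 + (u x₀) ^ 2) = r₀ := ⟨_, rfl⟩
  have hr₀ : 0 < r₀ := hr₀_def ▸ hr x₀ hx₀
  have hvx₀ : v x₀ = r₀ * e := by
    have h := hcos x₀ hx₀
    rw [hck, hr₀_def] at h
    exact h
  have h5 : d * e * r₀ = c := by
    calc d * e * r₀ = d * (r₀ * e) := by ring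
      _ = d * v x₀ := by rw [← hvx₀]
      _ = c := hWx
  have hde : 0 < d * e := by nlinarith [h5, hr₀, hc]
  obtain ⟨ε₂, hε₂, hsign⟩ := slope_sign hder hd0 hux₀
  have h2 : θ ⁻¹' Metric.ball (θ x₀) π ∈ nhdsWithin x₀ (Icc 0 a) :=
    (hθc x₀ hx₀) (Metric.ball_mem_nhds (θ x₀) Real.pi_pos)
  rw [Metric.mem_nhdsWithin_iff] at h2
  obtain ⟨ε₁, hε₁, hball₁⟩ := h2
  refine ⟨min ε₁ ε₂, lt_min hε₁ hε₂, fun x hx hne hxe => ?_⟩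
  have hθx : |θ x - (k : ℝ) * π| < π := by
    have := hball₁ ⟨by
      simpa [Metric.mem_ball, Real.dist_eq] using lt_of_lt_of_le hxe (min_le_left _ _), hx⟩
    simpa [Metric.mem_ball, Real.dist_eq, hk] using this
  have husign : 0 < u x * (x - x₀) * d := hsign x hne (lt_of_lt_of_le hxe (min_le_right _ _))
  obtain ⟨rx, hrx_def⟩ : ∃ rx, Real.sqrt ((v x) ^ 2 + (u x) ^ 2) = rx := ⟨_, rfl⟩
  have hrx : 0 < rx := hrx_def ▸ hr x hx
  have hsx : u x = rx * Real.sin (θ x) := hrx_def ▸ hsin x hx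
  have hdd : 0 < d * d := mul_self_pos.mpr hd0
  set t := θ x - (k : ℝ) * π with ht_def
  have hst : Real.sin (θ x) = e * Real.sin t := by
    have h3 := Real.sin_add_int_mul_pi (θ x - (k : ℝ) * π) k
    rw [sub_add_cancel] at h3
    rw [h3, he_def]
  have habs := abs_lt.mp hθx
  constructor
  · intro hlt
    have hp : 0 < x - x₀ := sub_pos.mpr hlt
    have h6 : 0 < u x * d := by
      have h := div_pos husign hp
      rwa [show u x * (x - x₀) * d / (x - x₀) = u x * d * ((x - x₀) / (x - x₀)) from by ring,
        div_self (ne_of_gt hp), mul_one] at h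
    have h7 : 0 < Real.sin (θ x) * d := by
      have h := div_pos h6 hrx
      rwa [hsx, show rx * Real.sin (θ x) * d / rx = Real.sin (θ x) * d * (rx / rx) from by ring,
        div_self (ne_of_gt hrx), mul_one] at h
    have hP : Real.sin (θ x) * d * (d * e) = Real.sin t * (d * d) * (e * e) := by
      rw [hst]; ring
    rw [he, mul_one] at hP
    have h9 : 0 < Real.sin t * (d * d) := hP ▸ mul_pos h7 hde
    have h8 : 0 < Real.sin t := by
      have h := div_pos h9 hdd
      rwa [show Real.sin t * (d * d) / (d * d) = Real.sin t * ((d * d) / (d * d)) from by ring,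
        div_self (ne_of_gt hdd), mul_one] at h
    have hTpos : 0 < t := by
      by_contra hcon
      push_neg at hcon
      have h10 : 0 ≤ -t := by linarith
      have h11 : -t ≤ π := by linarith [habs.1]
      have := Real.sin_nonneg_of_nonneg_of_le_pi h10 h11
      rw [Real.sin_neg] at this
      linarith
    linarith [ht_def ▸ hTpos]
  · intro hlt
    have hp : 0 < x₀ - x := sub_pos.mpr hlt
    have h6 : u x * d < 0 := by
      have h := div_pos husign hp
      rw [show u x * (x - x₀) * d / (x₀ - x) = -(u x * d) * ((x₀ - x) / (x₀ - x)) from by ring,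
        div_self (ne_of_gt hp), mul_one] at h
      linarith
    have h7 : Real.sin (θ x) * d < 0 := by
      have h := div_neg_of_neg_of_pos h6 hrx
      rwa [hsx, show rx * Real.sin (θ x) * d / rx = Real.sin (θ x) * d * (rx / rx) from by ring,
        div_self (ne_of_gt hrx), mul_one] at h
    have hP : Real.sin (θ x) * d * (d * e) = Real.sin t * (d * d) * (e * e) := by
      rw [hst]; ring
    rw [he, mul_one] at hP
    have h9 : Real.sin t * (d * d) < 0 := by
      have := mul_neg_of_neg_of_pos h7 hde
      linarith [hP ▸ this]
    have h8 : Real.sin t < 0 := by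
      have h := div_neg_of_neg_of_pos h9 hdd
      rwa [show Real.sin t * (d * d) / (d * d) = Real.sin t * ((d * d) / (d * d)) from by ring,
        div_self (ne_of_gt hdd), mul_one] at h
    have hTneg : t < 0 := by
      by_contra hcon
      push_neg at hcon
      have h11 : t ≤ π := by linarith [habs.2]
      have := Real.sin_nonneg_of_nonneg_of_le_pi hcon h11
      linarith
    have : θ x - (k : ℝ) * π < 0 := ht_def ▸ hTneg
    linarith

/-- Claim C: after a zero of `u` at level `k π`, θ stays strictly above `k π`. -/
private lemma claimC (a : ℝ) (u v θ : ℝ → ℝ) (c : ℝ) (hc : 0 < c)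
    (hud : Differentiable ℝ u)
    (hW : ∀ x ∈ Icc 0 a, deriv u x * v x - u x * deriv v x = c)
    (hθc : ContinuousOn θ (Icc 0 a))
    (hr : ∀ x ∈ Icc 0 a, 0 < Real.sqrt ((v x) ^ 2 + (u x) ^ 2))
    (hcos : ∀ x ∈ Icc 0 a, v x = Real.sqrt ((v x) ^ 2 + (u x) ^ 2) * Real.cos (θ x))
    (hsin : ∀ x ∈ Icc 0 a, u x = Real.sqrt ((v x) ^ 2 + (u x) ^ 2) * Real.sin (θ x))
    (x₁ : ℝ) (hx₁ : x₁ ∈ Icc 0 a) (hux₁ : u x₁ = 0) (k : ℤ) (hk : θ x₁ = k * π)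
    (x₂ : ℝ) (hx₂ : x₂ ∈ Icc 0 a) (hlt : x₁ < x₂) : (k : ℝ) * π < θ x₂ := by
  by_contra hcon
  push_neg at hcon
  obtain ⟨ε, hε, hA⟩ := claimA a u v θ c hc hud hW hθc hr hcos hsin x₁ hx₁ hux₁ k hk
  set x₃ := min (x₁ + ε / 2) ((x₁ + x₂) / 2) with hx₃def
  have hx₃gt : x₁ < x₃ := lt_min (by linarith) (by linarith)
  have hx₃lt : x₃ < x₂ := lt_of_le_of_lt (min_le_right _ _) (by linarith)
  have hx₃mem : x₃ ∈ Icc 0 a := ⟨le_trans hx₁.1 (le_of_lt hx₃gt), le_trans (le_of_lt hx₃lt) hx₂.2⟩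
  have hx₃abs : |x₃ - x₁| < ε := by
    rw [abs_lt]
    constructor
    · linarith
    · have := min_le_left (x₁ + ε / 2) ((x₁ + x₂) / 2)
      rw [← hx₃def] at this
      linarith
  have hθx₃ : (k : ℝ) * π < θ x₃ :=
    (hA x₃ hx₃mem (ne_of_gt hx₃gt) hx₃abs).1 hx₃gt
  have hsub : Icc x₃ x₂ ⊆ Icc 0 a := Icc_subset_Icc hx₃mem.1 hx₂.2
  set T := {x ∈ Icc x₃ x₂ | θ x ≤ (k : ℝ) * π} with hT
  have hTc : IsClosed T := by
    have hTeq : T = Icc x₃ x₂ ∩ θ ⁻¹' (Iic ((k : ℝ) * π)) := by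
      ext y; simp [hT]
    rw [hTeq]
    exact (hθc.mono hsub).preimage_isClosed_of_isClosed isClosed_Icc isClosed_Iic
  have hTne : T.Nonempty := ⟨x₂, ⟨le_of_lt hx₃lt, le_refl _⟩, hcon⟩
  have hTbdd : BddBelow T := ⟨x₃, fun y hy => hy.1.1⟩
  set s := sInf T with hs_def
  have hsT : s ∈ T := hTc.csInf_mem hTne hTbdd
  have hsmem : s ∈ Icc 0 a := hsub hsT.1
  have hs3 : x₃ < s := by
    rcases lt_or_eq_of_le hsT.1.1 with h | h
    · exact h
    · exfalso; rw [← h] at hsT; linarith [hsT.2]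
  have hbelow : ∀ x ∈ Ico x₃ s, (k : ℝ) * π < θ x := by
    intro x hx
    by_contra h
    push_neg at h
    have hxT : x ∈ T := ⟨⟨hx.1, le_trans (le_of_lt hx.2) hsT.1.2⟩, h⟩
    exact absurd (csInf_le hTbdd hxT) (not_le.mpr hx.2)
  have hθs_ge : (k : ℝ) * π ≤ θ s := by
    have hIsub : Ico x₃ s ⊆ Icc 0 a := fun y hy =>
      ⟨le_trans hx₃mem.1 hy.1, le_trans (le_of_lt hy.2) hsmem.2⟩
    have hne : (nhdsWithin s (Ico x₃ s)).NeBot := by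
      rw [← mem_closure_iff_nhdsWithin_neBot, closure_Ico (ne_of_lt hs3)]
      exact ⟨le_of_lt hs3, le_refl _⟩
    have htend : Tendsto θ (nhdsWithin s (Ico x₃ s)) (nhds (θ s)) :=
      (hθc s hsmem).mono hIsub
    exact ge_of_tendsto htend
      (eventually_of_mem self_mem_nhdsWithin (fun y hy => le_of_lt (hbelow y hy)))
  have hθs : θ s = (k : ℝ) * π := le_antisymm hsT.2 hθs_ge
  have hus : u s = 0 := by
    rw [hsin s hsmem, hθs, Real.sin_int_mul_pi, mul_zero]
  obtain ⟨ε', hε', hA'⟩ := claimA a u v θ c hc hud hW hθc hr hcos hsin s hsmem hus k hθs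
  set x₄ := max x₃ (s - ε' / 2) with hx₄def
  have hx₄lt : x₄ < s := max_lt hs3 (by linarith)
  have hx₄ge : x₃ ≤ x₄ := le_max_left _ _
  have hx₄mem : x₄ ∈ Icc 0 a := ⟨le_trans hx₃mem.1 hx₄ge, le_trans (le_of_lt hx₄lt) hsmem.2⟩
  have habs : |x₄ - s| < ε' := by
    have h1 := le_max_right x₃ (s - ε' / 2)
    rw [← hx₄def] at h1
    rw [abs_lt]
    constructor <;> linarith
  have h2 := (hA' x₄ hx₄mem (ne_of_lt hx₄lt) habs).2 hx₄lt
  exact absurd h2 (not_lt.mpr (le_of_lt (hbelow x₄ ⟨hx₄ge, hx₄lt⟩)))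

/-- Let `u, v` solve `−w″ + Vw = Ew` on `[0,a]` with constant Wronskian
`u′v − uv′ = c > 0`, `u(0) = 0`, `v(0) > 0`. Then `(v(x), u(x)) ≠ (0,0)` on `[0,a]`, and if
`θ` is a continuous argument of `x ↦ (v(x), u(x))` with `θ(0) = 0`, then whenever `u` has
exactly `m` zeros in `(0,a)`, one has `θ(a) ∈ (mπ, (m+1)π]`. -/
theorem rotation_number_uv (V : ℝ → ℝ) (hVb : ∃ M, ∀ x, |V x| ≤ M) (hVc : Continuous V)
    (E : ℝ) (a : ℝ) (ha : 0 < a) (u v : ℝ → ℝ)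
    (hu : ContDiff ℝ 2 u) (hv : ContDiff ℝ 2 v)
    (hodeu : ∀ x ∈ Icc 0 a, deriv (deriv u) x = (V x - E) * u x)
    (hodev : ∀ x ∈ Icc 0 a, deriv (deriv v) x = (V x - E) * v x)
    (c : ℝ) (hc : 0 < c)
    (hW : ∀ x ∈ Icc 0 a, deriv u x * v x - u x * deriv v x = c)
    (hu0 : u 0 = 0) (hv0 : 0 < v 0) :
    (∀ x ∈ Icc 0 a, ¬ (v x = 0 ∧ u x = 0)) ∧
    ∀ θ : ℝ → ℝ, ContinuousOn θ (Icc 0 a) → θ 0 = 0 →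
      (∀ x ∈ Icc 0 a, 0 < Real.sqrt ((v x) ^ 2 + (u x) ^ 2)) →
      (∀ x ∈ Icc 0 a, v x = Real.sqrt ((v x) ^ 2 + (u x) ^ 2) * Real.cos (θ x)) →
      (∀ x ∈ Icc 0 a, u x = Real.sqrt ((v x) ^ 2 + (u x) ^ 2) * Real.sin (θ x)) →
      ∀ m : ℕ, {x ∈ Ioo 0 a | u x = 0}.Finite → {x ∈ Ioo 0 a | u x = 0}.ncard = m →
        θ a ∈ Ioc (m * π) ((m + 1) * π) := by
  have hud : Differentiable ℝ u := hu.differentiable (by norm_num)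
  constructor
  · rintro x hx ⟨hvx, hux⟩
    have h1 := hW x hx
    rw [hvx, hux, mul_zero, zero_mul, sub_zero] at h1
    linarith
  · intro θ hθc hθ0 hr hcos hsin m hfin hcard
    have hamem : a ∈ Icc 0 a := ⟨le_of_lt ha, le_refl a⟩
    have h0mem : (0 : ℝ) ∈ Icc 0 a := ⟨le_refl 0, le_of_lt ha⟩
    have hk0 : θ 0 = ((0 : ℤ) : ℝ) * π := by rw [hθ0]; simp
    have hC : ∀ x₁ ∈ Icc 0 a, u x₁ = 0 → ∀ k : ℤ, θ x₁ = (k : ℝ) * π →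
        ∀ x₂ ∈ Icc 0 a, x₁ < x₂ → (k : ℝ) * π < θ x₂ :=
      fun x₁ h1 h2 k h3 x₂ h4 h5 =>
        claimC a u v θ c hc hud hW hθc hr hcos hsin x₁ h1 h2 k h3 x₂ h4 h5
    have hθa_pos : 0 < θ a := by
      have := hC 0 h0mem hu0 0 hk0 a hamem ha
      simpa using this
    set Z := {x ∈ Ioo 0 a | u x = 0} with hZ
    have hZsub : ∀ x ∈ Z, x ∈ Icc 0 a := fun x hx =>
      ⟨le_of_lt hx.1.1, le_of_lt hx.1.2⟩
    set F : ℝ → ℤ := fun x => round (θ x / π) with hF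
    have hzeroθ : ∀ x ∈ Icc 0 a, u x = 0 → ∃ n : ℤ, θ x = (n : ℝ) * π := by
      intro x hx hux
      have hrx := hr x hx
      have hsx : Real.sqrt ((v x) ^ 2 + (u x) ^ 2) * Real.sin (θ x) = 0 := by
        rw [← hsin x hx, hux]
      have hs0 : Real.sin (θ x) = 0 := by
        rcases mul_eq_zero.mp hsx with h | h
        · exact absurd h (ne_of_gt hrx)
        · exact h
      obtain ⟨n, hn⟩ := Real.sin_eq_zero_iff.mp hs0
      exact ⟨n, hn.symm⟩
    have hFval : ∀ x ∈ Icc 0 a, u x = 0 → θ x = ((F x : ℤ) : ℝ) * π := by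
      intro x hx hux
      obtain ⟨n, hn⟩ := hzeroθ x hx hux
      have hFx : F x = n := by
        rw [hF]
        simp only
        rw [hn, mul_div_cancel_right₀ _ (ne_of_gt Real.pi_pos), round_intCast]
      rw [hFx, hn]
    set S := {k : ℤ | 1 ≤ k ∧ (k : ℝ) * π < θ a} with hS
    have hmaps : MapsTo F Z S := by
      intro x hx
      have hxI := hZsub x hx
      have hθx := hFval x hxI hx.2
      have h1 : 0 < θ x := by simpa using hC 0 h0mem hu0 0 hk0 x hxI hx.1.1
      have h2 : ((F x : ℤ) : ℝ) * π < θ a := hC x hxI hx.2 (F x) hθx a hamem hx.1.2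
      constructor
      · by_contra h
        push_neg at h
        have h3 : F x ≤ 0 := by omega
        have h4 : ((F x : ℤ) : ℝ) ≤ 0 := by exact_mod_cast h3
        nlinarith [Real.pi_pos, hθx]
      · exact h2
    have hinj : InjOn F Z := by
      intro x hx y hy hxy
      by_contra hne
      rcases lt_or_gt_of_ne hne with h | h
      · have h1 := hC x (hZsub x hx) hx.2 (F x) (hFval x (hZsub x hx) hx.2) y (hZsub y hy) h
        rw [hxy, ← hFval y (hZsub y hy) hy.2] at h1
        exact lt_irrefl _ h1
      · have h1 := hC y (hZsub y hy) hy.2 (F y) (hFval y (hZsub y hy) hy.2) x (hZsub x hx) h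
        rw [← hxy, ← hFval x (hZsub x hx) hx.2] at h1
        exact lt_irrefl _ h1
    have hsurj : SurjOn F Z S := by
      intro k hk
      have hk1 : (1 : ℝ) ≤ (k : ℝ) := by exact_mod_cast hk.1
      have hmemIoo : (k : ℝ) * π ∈ Ioo (θ 0) (θ a) := by
        constructor
        · rw [hθ0]; nlinarith [Real.pi_pos]
        · exact hk.2
      obtain ⟨x, hx, hθx⟩ := intermediate_value_Ioo (le_of_lt ha) hθc hmemIoo
      have hxI : x ∈ Icc 0 a := ⟨le_of_lt hx.1, le_of_lt hx.2⟩
      have hux : u x = 0 := by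
        rw [hsin x hxI, hθx, Real.sin_int_mul_pi, mul_zero]
      refine ⟨x, ⟨hx, hux⟩, ?_⟩
      rw [hF]
      simp only
      rw [hθx, mul_div_cancel_right₀ _ (ne_of_gt Real.pi_pos), round_intCast]
    have hbij : BijOn F Z S := ⟨hmaps, hinj, hsurj⟩
    have hScard : S.ncard = m := by
      rw [← hbij.image_eq, Set.ncard_image_of_injOn hinj, hcard]
    have hSfin : S.Finite := by
      rw [← hbij.image_eq]; exact hfin.image F
    rw [mem_Ioc]
    constructor
    · by_contra h
      push_neg at h
      rcases Nat.eq_zero_or_pos m with hm | hm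
      · rw [hm] at h
        norm_num at h
        linarith
      · have hsub : S ⊆ ↑(Finset.Icc (1 : ℤ) ((m : ℤ) - 1)) := by
          intro k hk
          simp only [Finset.coe_Icc, mem_Icc]
          refine ⟨hk.1, ?_⟩
          have h1 : (k : ℝ) * π < (m : ℝ) * π := lt_of_lt_of_le hk.2 h
          have h2 : (k : ℝ) < (m : ℝ) := lt_of_mul_lt_mul_right h1 (le_of_lt Real.pi_pos)
          have h3 : k < (m : ℤ) := by exact_mod_cast h2
          omega
        have h4 := Set.ncard_le_ncard hsub (Finset.finite_toSet _)
        rw [Set.ncard_coe_finset, hScard, Int.card_Icc] at h4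
        omega
    · by_contra h
      push_neg at h
      have hsub : ↑(Finset.Icc (1 : ℤ) ((m : ℤ) + 1)) ⊆ S := by
        intro k hk
        simp only [Finset.coe_Icc, mem_Icc] at hk
        refine ⟨hk.1, ?_⟩
        have hk2 : (k : ℝ) ≤ (m : ℝ) + 1 := by exact_mod_cast hk.2
        have h1 : (k : ℝ) * π ≤ ((m : ℝ) + 1) * π :=
          mul_le_mul_of_nonneg_right hk2 (le_of_lt Real.pi_pos)
        linarith
      have h4 := Set.ncard_le_ncard hsub hSfin
      rw [Set.ncard_coe_finset, hScard, Int.card_Icc] at h4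
      omega
end

section
/- (Finite-interval renormalized oscillation theorem) Let V : ℝ → ℝ be bounded and continuous, let E₁ < E₂, and for j = 1,2 let u_j = u(·,E_j) be the solution of −u″ + Vu = E_j u with u_j(0) = 0, u_j′(0) = 1. Let a > 0 and suppose u₂(a) = 0 and u₁(a) ≠ 0. Define the Wronskian W(x) = u₁(x)u₂′(x) − u₁′(x)u₂(x). Then the number of Dirichlet eigenvalues of −d²/dx² + V on [0,a] lying in the open interval (E₁, E₂) equals the number of zeros of W in the open interval (0,a). -/
open Set Real Filter

noncomputable section RenOscAux

variable {V : ℝ → ℝ} {M : ℝ}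

/-- The Prüfer angle vector field. -/
def prufG (V : ℝ → ℝ) (E x θ : ℝ) : ℝ := cos θ ^ 2 + (E - V x) * sin θ ^ 2

theorem sin_sq_lipschitz (s t : ℝ) : |sin s ^ 2 - sin t ^ 2| ≤ 2 * |s - t| := by
  have h : sin s ^ 2 - sin t ^ 2 = (sin s - sin t) * (sin s + sin t) := by ring
  rw [h, abs_mul]
  have h1 : |sin s - sin t| ≤ |s - t| := by
    rw [Real.sin_sub_sin]
    rw [abs_mul, abs_mul]
    have := Real.abs_sin_le_abs (x := (s - t) / 2)
    have hc := Real.abs_cos_le_one ((s + t) / 2)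
    calc |(2:ℝ)| * |sin ((s - t)/2)| * |cos ((s + t)/2)|
        ≤ |(2:ℝ)| * |(s - t)/2| * 1 := by
          apply mul_le_mul (mul_le_mul le_rfl this (abs_nonneg _) (abs_nonneg _)) hc
            (abs_nonneg _) (by positivity)
      _ = |s - t| := by rw [abs_div, abs_two]; ring
  have h2 : |sin s + sin t| ≤ 2 := by
    calc |sin s + sin t| ≤ |sin s| + |sin t| := abs_add_le _ _
      _ ≤ 1 + 1 := add_le_add (abs_sin_le_one s) (abs_sin_le_one t)
      _ = 2 := by norm_num
  calc |sin s - sin t| * |sin s + sin t| ≤ |s - t| * 2 :=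
        mul_le_mul h1 h2 (abs_nonneg _) (abs_nonneg _)
    _ = 2 * |s - t| := by ring

theorem prufG_dist_le {V : ℝ → ℝ} {M : ℝ} (hM : ∀ x, |V x| ≤ M) (E x α β : ℝ) :
    |prufG V E x α - prufG V E x β| ≤ (2 * (1 + M + |E|)) * |α - β| := by
  have hM0 : (0:ℝ) ≤ M := le_trans (abs_nonneg _) (hM 0)
  have hkey : prufG V E x α - prufG V E x β
      = (E - V x - 1) * (sin α ^ 2 - sin β ^ 2) := by
    simp only [prufG, Real.cos_sq', ]
    ring
  rw [hkey, abs_mul]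
  have h1 : |E - V x - 1| ≤ 1 + M + |E| := by
    have := hM x
    calc |E - V x - 1| ≤ |E| + |V x| + 1 := by
          calc |E - V x - 1| ≤ |E - V x| + |(1:ℝ)| := abs_sub _ _
            _ ≤ |E| + |V x| + 1 := by
                have := abs_sub E (V x); simp at this ⊢; linarith [abs_sub E (V x)]
      _ ≤ 1 + M + |E| := by linarith
  calc |E - V x - 1| * |sin α ^ 2 - sin β ^ 2| ≤ (1 + M + |E|) * (2 * |α - β|) := by
        apply mul_le_mul h1 (sin_sq_lipschitz α β) (abs_nonneg _) (by positivity)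
    _ = (2 * (1 + M + |E|)) * |α - β| := by ring

theorem prufG_lip {V : ℝ → ℝ} {M : ℝ} (hM : ∀ x, |V x| ≤ M) (E x : ℝ) :
    LipschitzWith (Real.toNNReal (2 * (1 + M + |E|))) (fun θ => prufG V E x θ) := by
  have hM0 : (0:ℝ) ≤ M := le_trans (abs_nonneg _) (hM 0)
  rw [lipschitzWith_iff_dist_le_mul]
  intro α β
  simp only [Real.dist_eq]
  rw [Real.coe_toNNReal _ (by positivity)]
  exact prufG_dist_le hM E x α β

theorem prufG_bound {V : ℝ → ℝ} {M : ℝ} (hM : ∀ x, |V x| ≤ M) (E x θ : ℝ) :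
    |prufG V E x θ| ≤ 1 + M + |E| := by
  have hM0 : (0:ℝ) ≤ M := le_trans (abs_nonneg _) (hM 0)
  simp only [prufG]
  have h1 : |cos θ ^ 2| ≤ 1 := by
    rw [abs_of_nonneg (sq_nonneg _)]
    exact Real.cos_sq_le_one θ
  have h2 : |(E - V x) * sin θ ^ 2| ≤ M + |E| := by
    rw [abs_mul]
    have ha : |E - V x| ≤ |E| + M := by
      calc |E - V x| ≤ |E| + |V x| := abs_sub E (V x)
        _ ≤ |E| + M := by linarith [hM x]
    have hb : |sin θ ^ 2| ≤ 1 := by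
      rw [abs_of_nonneg (sq_nonneg _)]; exact Real.sin_sq_le_one θ
    calc |E - V x| * |sin θ ^ 2| ≤ (|E| + M) * 1 :=
          mul_le_mul ha hb (abs_nonneg _) (by positivity)
      _ = M + |E| := by ring
  calc |cos θ ^ 2 + (E - V x) * sin θ ^ 2| ≤ |cos θ ^ 2| + |(E - V x) * sin θ ^ 2| := abs_add_le _ _
    _ ≤ 1 + (M + |E|) := add_le_add h1 h2
    _ = 1 + M + |E| := by ring

/-- Global existence of the Prüfer angle. -/
theorem exists_pruferAngle {V : ℝ → ℝ} {M : ℝ} (hM : ∀ x, |V x| ≤ M) (hVc : Continuous V)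
    (E : ℝ) : ∃ θ : ℝ → ℝ, θ 0 = 0 ∧ ∀ x, HasDerivAt θ (prufG V E x (θ x)) x := by
  have hM0 : (0:ℝ) ≤ M := le_trans (abs_nonneg _) (hM 0)
  have hC0 : 0 < 1 + M + |E| := by positivity
  -- local solutions on [-(n+1), n+1]
  have hloc : ∀ n : ℕ, ∃ f : ℝ → ℝ, f 0 = 0 ∧
      ∀ t ∈ Ioo (-(n+2:ℝ)) (n+2:ℝ), HasDerivAt f (prufG V E t (f t)) t := by
    intro n
    have hpl : IsPicardLindelof (fun t θ => prufG V E t θ) (tmin := -(n+2:ℝ)) (tmax := (n+2:ℝ))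
        ⟨0, by constructor <;> [linarith; positivity]⟩ 0
        (Real.toNNReal ((1 + M + |E|) * (n+2))) 0 (Real.toNNReal (1 + M + |E|))
        (Real.toNNReal (2 * (1 + M + |E|))) := by
      constructor
      · intro t _
        exact (prufG_lip hM E t).lipschitzOnWith
      · intro θ _
        exact (continuous_const.add ((continuous_const.sub hVc).mul continuous_const)).continuousOn
      · intro t _ θ _
        rw [Real.coe_toNNReal _ hC0.le, Real.norm_eq_abs]
        exact prufG_bound hM E t θ
      · rw [Real.coe_toNNReal _ hC0.le, Real.coe_toNNReal _ (by positivity)]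
        simp only [NNReal.coe_zero, zero_sub, sub_zero, neg_neg, max_self]
        nlinarith
    obtain ⟨f, hf0, hf⟩ := hpl.exists_eq_forall_mem_Icc_hasDerivWithinAt₀
    refine ⟨f, hf0, fun t ht => ?_⟩
    have ht' : t ∈ Icc (-(n+2:ℝ)) (n+2:ℝ) := Ioo_subset_Icc_self ht
    exact (hf t ht').hasDerivAt (Icc_mem_nhds ht.1 ht.2)
  choose f hf0 hf using hloc
  -- consistency
  have hcons : ∀ m n : ℕ, ∀ x : ℝ, |x| ≤ (min m n : ℕ) + 1 → f m x = f n x := by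
    intro m n x hx
    set k : ℕ := min m n with hk
    have hkm : (k:ℝ) ≤ m := by exact_mod_cast Nat.cast_le.mpr (min_le_left m n)
    have hkn : (k:ℝ) ≤ n := by exact_mod_cast Nat.cast_le.mpr (min_le_right m n)
    have huniq : EqOn (f m) (f n) (Icc (-(k+1:ℝ)) (k+1:ℝ)) := by
      apply ODE_solution_unique_of_mem_Icc (s := fun _ => univ)
        (fun t _ => ((prufG_lip hM E t).lipschitzOnWith)) (t₀ := 0)
      · constructor <;> [linarith; positivity]
      · exact fun t ht => (hf m t ⟨by linarith [ht.1], by linarith [ht.2]⟩).continuousAt.continuousWithinAt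
      · exact fun t ht => hf m t ⟨by linarith [ht.1], by linarith [ht.2]⟩
      · exact fun _ _ => mem_univ _
      · exact fun t ht => (hf n t ⟨by linarith [ht.1], by linarith [ht.2]⟩).continuousAt.continuousWithinAt
      · exact fun t ht => hf n t ⟨by linarith [ht.1], by linarith [ht.2]⟩
      · exact fun _ _ => mem_univ _
      · rw [hf0 m, hf0 n]
    apply huniq
    rw [mem_Icc]
    constructor <;> [linarith [neg_abs_le x]; linarith [le_abs_self x]]
  refine ⟨fun x => f ⌈|x|⌉₊ x, by simpa using hf0 _, fun x => ?_⟩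
  set n : ℕ := ⌈|x|⌉₊ + 1 with hn
  have hxn : |x| ≤ (n:ℝ) := by
    have := Nat.le_ceil |x|
    push_cast [hn]
    linarith
  have hx_eq : ∀ y : ℝ, |y| < |x| + 1 → f ⌈|y|⌉₊ y = f n y := by
    intro y hy
    apply hcons
    have h1 : |y| ≤ (⌈|y|⌉₊ : ℝ) + 1 := by linarith [Nat.le_ceil |y|]
    have h2 : |y| ≤ (n:ℝ) + 1 := by linarith
    have : ((min ⌈|y|⌉₊ n : ℕ) : ℝ) = min (⌈|y|⌉₊ : ℝ) (n : ℝ) := by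
      push_cast; rfl
    rw [this]
    rcases le_total (⌈|y|⌉₊ : ℝ) (n:ℝ) with h | h
    · rw [min_eq_left h]; linarith
    · rw [min_eq_right h]; linarith
  have hev : (fun y => f ⌈|y|⌉₊ y) =ᶠ[nhds x] f n := by
    have hopen : ∀ᶠ y in nhds x, |y| < |x| + 1 := by
      have : Continuous fun y : ℝ => |y| := continuous_abs
      exact (this.continuousAt).eventually_lt continuousAt_const (by linarith)
    exact hopen.mono fun y hy => hx_eq y hy
  have hdx : HasDerivAt (f n) (prufG V E x (f n x)) x := by
    apply hf n x
    constructor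
    · linarith [neg_abs_le x]
    · linarith [le_abs_self x]
  have hvx : f ⌈|x|⌉₊ x = f n x := hx_eq x (by linarith)
  have : (fun x => f ⌈|x|⌉₊ x) x = f n x := hvx
  rw [show prufG V E x ((fun x => f ⌈|x|⌉₊ x) x) = prufG V E x (f n x) by rw [this]]
  exact hdx.congr_of_eventuallyEq hev




/-- Global uniqueness for the Prüfer angle ODE. -/
theorem theta_unique (hM : ∀ x, |V x| ≤ M) {E : ℝ} {θ η : ℝ → ℝ}
    (hθ : ∀ x, HasDerivAt θ (prufG V E x (θ x)) x)
    (hη : ∀ x, HasDerivAt η (prufG V E x (η x)) x)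
    {x₀ : ℝ} (h0 : θ x₀ = η x₀) : θ = η := by
  funext x
  set T : ℝ := |x - x₀| + 1 with hT
  have hT1 : (1:ℝ) ≤ T := by simp only [hT]; linarith [abs_nonneg (x - x₀)]
  have : EqOn θ η (Icc (x₀ - T) (x₀ + T)) := by
    apply ODE_solution_unique_of_mem_Icc (s := fun _ => univ)
      (fun t _ => ((prufG_lip hM E t).lipschitzOnWith)) (t₀ := x₀)
    · constructor <;> linarith
    · exact fun t _ => (hθ t).continuousAt.continuousWithinAt
    · exact fun t _ => hθ t
    · exact fun _ _ => mem_univ _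
    · exact fun t _ => (hη t).continuousAt.continuousWithinAt
    · exact fun t _ => hη t
    · exact fun _ _ => mem_univ _
    · exact h0
  apply this
  constructor
  · have := neg_abs_le (x - x₀); simp only [hT]; linarith
  · have := le_abs_self (x - x₀); simp only [hT]; linarith

/-- Uniqueness for the second-order linear ODE on `[0,a]`, including derivative. -/
theorem ode2_unique (hM : ∀ x, |V x| ≤ M) {E a : ℝ}
    {f g f' g' : ℝ → ℝ}
    (hf : ∀ x, HasDerivAt f (f' x) x) (hg : ∀ x, HasDerivAt g (g' x) x)
    (hf' : ∀ x ∈ Icc 0 a, HasDerivAt f' ((V x - E) * f x) x)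
    (hg' : ∀ x ∈ Icc 0 a, HasDerivAt g' ((V x - E) * g x) x)
    (h0 : f 0 = g 0) (h0' : f' 0 = g' 0) :
    ∀ x ∈ Icc 0 a, f x = g x ∧ f' x = g' x := by
  have hM0 : (0:ℝ) ≤ M := le_trans (abs_nonneg _) (hM 0)
  set F : ℝ → ℝ × ℝ → ℝ × ℝ := fun t p => (p.2, (V t - E) * p.1) with hF
  have hFlip : ∀ t, LipschitzWith (Real.toNNReal (1 + M + |E|)) (F t) := by
    intro t
    rw [lipschitzWith_iff_dist_le_mul]
    intro p q
    rw [Prod.dist_eq, Prod.dist_eq]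
    rw [Real.coe_toNNReal _ (by positivity)]
    simp only [hF, Real.dist_eq]
    apply max_le
    · calc |p.2 - q.2| ≤ max |p.1 - q.1| |p.2 - q.2| := le_max_right _ _
        _ ≤ (1 + M + |E|) * max |p.1 - q.1| |p.2 - q.2| := by
            have h0 : (0:ℝ) ≤ max |p.1 - q.1| |p.2 - q.2| :=
              le_trans (abs_nonneg _) (le_max_left _ _)
            nlinarith [abs_nonneg E, mul_nonneg (by positivity : (0:ℝ) ≤ M + |E|) h0]
    · have : (V t - E) * p.1 - (V t - E) * q.1 = (V t - E) * (p.1 - q.1) := by ring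
      rw [this, abs_mul]
      have h1 : |V t - E| ≤ M + |E| := by
        calc |V t - E| ≤ |V t| + |E| := abs_sub _ _
          _ ≤ M + |E| := by linarith [hM t]
      calc |V t - E| * |p.1 - q.1| ≤ (M + |E|) * |p.1 - q.1| :=
            mul_le_mul_of_nonneg_right h1 (abs_nonneg _)
        _ ≤ (1 + M + |E|) * max |p.1 - q.1| |p.2 - q.2| := by
            calc (M + |E|) * |p.1 - q.1| ≤ (M + |E|) * max |p.1 - q.1| |p.2 - q.2| :=
                  mul_le_mul_of_nonneg_left (le_max_left _ _) (by positivity)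
              _ ≤ (1 + M + |E|) * max |p.1 - q.1| |p.2 - q.2| :=
                  mul_le_mul_of_nonneg_right (by linarith)
                    (le_trans (abs_nonneg _) (le_max_left _ _))
  intro x hx
  have key : EqOn (fun t => (f t, f' t)) (fun t => (g t, g' t)) (Icc 0 a) := by
    apply ODE_solution_unique_of_mem_Icc_right (v := F) (s := fun _ => univ)
      (fun t _ => (hFlip t).lipschitzOnWith)
    · exact fun t ht => ((hf t).continuousAt.prodMk ((hf' t ht).continuousAt)).continuousWithinAt
    · intro t ht
      exact (((hf t).prodMk (hf' t (mem_Icc_of_Ico ht))).hasDerivWithinAt)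
    · exact fun _ _ => mem_univ _
    · exact fun t ht => ((hg t).continuousAt.prodMk ((hg' t ht).continuousAt)).continuousWithinAt
    · intro t ht
      exact (((hg t).prodMk (hg' t (mem_Icc_of_Ico ht))).hasDerivWithinAt)
    · exact fun _ _ => mem_univ _
    · simp [h0, h0']
  have := key hx
  exact ⟨congrArg Prod.fst this, congrArg Prod.snd this⟩



/-- Amplitude together with the Prüfer angle gives a solution of the Schrödinger equation. -/
theorem pruf_w (hVc : Continuous V) {E : ℝ} {θ : ℝ → ℝ}
    (hθd : ∀ x, HasDerivAt θ (prufG V E x (θ x)) x) :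
    ∃ r : ℝ → ℝ, (∀ x, 0 < r x) ∧ r 0 = 1 ∧ Continuous r ∧
      (∀ x, HasDerivAt (fun y => r y * sin (θ y)) (r x * cos (θ x)) x) ∧
      (∀ x, HasDerivAt (fun y => r y * cos (θ y)) ((V x - E) * (r x * sin (θ x))) x) := by
  have hθc : Continuous θ := by
    rw [continuous_iff_continuousAt]; exact fun x => (hθd x).continuousAt
  set h : ℝ → ℝ := fun t => (1 + V t - E) * (sin (θ t) * cos (θ t)) with hh
  have hhc : Continuous h := by
    apply Continuous.mul
    · exact (continuous_const.add hVc).sub continuous_const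
    · exact ((Real.continuous_sin.comp hθc).mul (Real.continuous_cos.comp hθc))
  set ρ : ℝ → ℝ := fun x => ∫ t in (0:ℝ)..x, h t with hρ
  have hρd : ∀ x, HasDerivAt ρ (h x) x := by
    intro x
    apply intervalIntegral.integral_hasDerivAt_right
    · exact hhc.intervalIntegrable 0 x
    · exact hhc.stronglyMeasurable.stronglyMeasurableAtFilter
    · exact hhc.continuousAt
  set r : ℝ → ℝ := fun x => Real.exp (ρ x) with hr
  have hrd : ∀ x, HasDerivAt r (r x * h x) x := by
    intro x
    simpa [hr, mul_comm] using (hρd x).exp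
  have hrc : Continuous r := Real.continuous_exp.comp <| by
    rw [continuous_iff_continuousAt]; exact fun x => (hρd x).continuousAt
  refine ⟨r, fun x => Real.exp_pos _, by simp [hr, hρ], hrc, ?_, ?_⟩
  · intro x
    have hd := (hrd x).mul ((hθd x).sin)
    have heq : r x * h x * sin (θ x) + r x * (cos (θ x) * prufG V E x (θ x))
        = r x * cos (θ x) := by
      have pyth := sin_sq_add_cos_sq (θ x)
      simp only [hh, prufG]
      linear_combination (r x * cos (θ x)) * pyth
    rwa [heq] at hd
  · intro x
    have hd := (hrd x).mul ((hθd x).cos)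
    have heq : r x * h x * cos (θ x) + r x * (-sin (θ x) * prufG V E x (θ x))
        = (V x - E) * (r x * sin (θ x)) := by
      have pyth := sin_sq_add_cos_sq (θ x)
      simp only [hh, prufG]
      linear_combination (r x * (V x - E) * sin (θ x)) * pyth
    rwa [heq] at hd




/-- The fundamental comparison lemma: Prüfer angles for higher energy strictly overtake. -/
theorem pruf_compare (hM : ∀ x, |V x| ≤ M) {E E' : ℝ} (hEE : E < E')
    {α β : ℝ → ℝ}
    (hα : ∀ x, HasDerivAt α (prufG V E x (α x)) x)
    (hβ : ∀ x, HasDerivAt β (prufG V E' x (β x)) x)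
    {s : ℝ} (hs : α s = β s) : ∀ x, s < x → α x < β x := by
  have hM0 : (0:ℝ) ≤ M := le_trans (abs_nonneg _) (hM 0)
  set L : ℝ := 2 * (1 + M + |E'|) with hL
  have hL0 : 0 < L := by positivity
  set f : ℝ → ℝ := fun x => β x - α x with hf
  set d : ℝ → ℝ := fun x => prufG V E' x (β x) - prufG V E x (α x) with hd
  have hfd : ∀ x, HasDerivAt f (d x) x := fun x => (hβ x).sub (hα x)
  have hfc : Continuous f := by
    rw [continuous_iff_continuousAt]; exact fun x => (hfd x).continuousAt
  have hfs : f s = 0 := by simp [hf, hs]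
  have hkey : ∀ x, -L * |f x| + (E' - E) * sin (α x) ^ 2 ≤ d x := by
    intro x
    have h1 : |prufG V E' x (β x) - prufG V E' x (α x)| ≤ L * |f x| := by
      have h := prufG_dist_le hM E' x (β x) (α x)
      have : |β x - α x| = |f x| := by simp [hf]
      rw [this] at h
      simpa [hL] using h
    have h3 : d x = (prufG V E' x (β x) - prufG V E' x (α x)) + (E' - E) * sin (α x) ^ 2 := by
      simp only [hd, prufG]; ring
    rw [h3]
    have := neg_abs_le (prufG V E' x (β x) - prufG V E' x (α x))
    linarith
  -- Step 1: f is nonnegative after s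
  have step1 : ∀ x, s ≤ x → 0 ≤ f x := by
    intro x₀ hx₀
    by_contra hneg
    push_neg at hneg
    have hsx₀ : s < x₀ := by
      rcases lt_or_eq_of_le hx₀ with h | h
      · exact h
      · exfalso; rw [← h] at hneg; linarith [hfs ▸ hneg]
    set T : Set ℝ := Icc s x₀ ∩ {x | 0 ≤ f x} with hT
    have hTc : IsClosed T := isClosed_Icc.inter (isClosed_le continuous_const hfc)
    have hTne : T.Nonempty := ⟨s, ⟨le_refl s, le_of_lt hsx₀⟩, le_of_eq hfs.symm⟩
    have hTbdd : BddAbove T := BddAbove.mono (fun x hx => hx.1) bddAbove_Icc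
    set z : ℝ := sSup T with hz
    have hzT : z ∈ T := hTc.csSup_mem hTne hTbdd
    have hzx₀ : z ≤ x₀ := hzT.1.2
    have hzne : z ≠ x₀ := by
      intro h
      have := hzT.2
      rw [h] at this
      simp only [mem_setOf_eq] at this
      linarith
    have hzlt : z < x₀ := lt_of_le_of_ne hzx₀ hzne
    have hIoc : ∀ y ∈ Ioc z x₀, f y < 0 := by
      intro y hy
      by_contra hge
      push_neg at hge
      have hyT : y ∈ T := ⟨⟨le_trans hzT.1.1 (le_of_lt hy.1), hy.2⟩, hge⟩
      have : y ≤ z := le_csSup hTbdd hyT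
      linarith [hy.1]
    -- G := f * exp(-L x) is monotone on [z, x₀]
    set G : ℝ → ℝ := fun x => f x * Real.exp (-L * x) with hG
    have hGd : ∀ y, HasDerivAt G ((d y - L * f y) * Real.exp (-L * y)) y := by
      intro y
      have h1 : HasDerivAt (fun x : ℝ => Real.exp (-L * x)) (-L * Real.exp (-L * y)) y := by
        have := (hasDerivAt_id y).const_mul (-L)
        have h2 := this.exp
        simpa [mul_comm] using h2
      have := (hfd y).mul h1
      exact this.congr_deriv (by ring)
    have hGmono : MonotoneOn G (Icc z x₀) := by
      apply monotoneOn_of_deriv_nonneg (convex_Icc z x₀)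
      · exact (hfc.mul (Real.continuous_exp.comp (continuous_const.mul continuous_id))).continuousOn
      · intro y hy
        exact ((hGd y).differentiableAt).differentiableWithinAt
      · intro y hy
        rw [interior_Icc] at hy
        rw [(hGd y).deriv]
        have hfy : f y < 0 := hIoc y ⟨hy.1, le_of_lt hy.2⟩
        have : -L * |f y| = L * f y := by rw [abs_of_neg hfy]; ring
        have hk := hkey y
        rw [this] at hk
        have : 0 ≤ d y - L * f y := by nlinarith [sq_nonneg (sin (α y))]
        positivity
    have h1 : G z ≤ G x₀ := hGmono ⟨le_refl z, le_of_lt hzlt⟩ ⟨le_of_lt hzlt, le_refl x₀⟩ (le_of_lt hzlt)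
    have h2 : 0 ≤ G z := by
      have := hzT.2
      simp only [mem_setOf_eq] at this
      have := Real.exp_pos (-L * z)
      simp only [hG]
      positivity
    have h3 : G x₀ < 0 := by
      simp only [hG]
      have := Real.exp_pos (-L * x₀)
      nlinarith
    linarith
  -- Step 2: strict positivity
  intro x₁ hx₁
  rw [← sub_pos]
  show 0 < f x₁
  rcases lt_or_eq_of_le (step1 x₁ (le_of_lt hx₁)) with h | h
  · exact h
  exfalso
  -- f x₁ = 0; consider F = f * exp(L x), monotone on [s, x₁], zero at both ends
  set F : ℝ → ℝ := fun x => f x * Real.exp (L * x) with hF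
  have hFd : ∀ y, HasDerivAt F ((d y + L * f y) * Real.exp (L * y)) y := by
    intro y
    have h1 : HasDerivAt (fun x : ℝ => Real.exp (L * x)) (L * Real.exp (L * y)) y := by
      have := ((hasDerivAt_id y).const_mul L).exp
      simpa [mul_comm] using this
    have := (hfd y).mul h1
    exact this.congr_deriv (by ring)
  have hFmono : MonotoneOn F (Icc s x₁) := by
    apply monotoneOn_of_deriv_nonneg (convex_Icc s x₁)
    · exact (hfc.mul (Real.continuous_exp.comp (continuous_const.mul continuous_id))).continuousOn
    · intro y hy
      exact ((hFd y).differentiableAt).differentiableWithinAt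
    · intro y hy
      rw [interior_Icc] at hy
      rw [(hFd y).deriv]
      have hfy : 0 ≤ f y := step1 y (le_of_lt hy.1)
      have habs : -L * |f y| = -(L * f y) := by rw [abs_of_nonneg hfy]; ring
      have hk := hkey y
      rw [habs] at hk
      have : 0 ≤ d y + L * f y := by nlinarith [sq_nonneg (sin (α y))]
      positivity
  have hFzero : ∀ y ∈ Icc s x₁, F y = 0 := by
    intro y hy
    have h1 : F s ≤ F y := hFmono ⟨le_refl s, le_of_lt hx₁⟩ hy hy.1
    have h2 : F y ≤ F x₁ := hFmono hy ⟨le_of_lt hx₁, le_refl x₁⟩ hy.2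
    have hFs : F s = 0 := by simp [hF, hfs]
    have hFx₁ : F x₁ = 0 := by simp [hF, ← h]
    have := Real.exp_pos (L * y)
    linarith [hFs ▸ h1, hFx₁ ▸ h2]
  have hfzero : ∀ y ∈ Icc s x₁, f y = 0 := by
    intro y hy
    have := hFzero y hy
    have hexp := Real.exp_pos (L * y)
    simp only [hF] at this
    rcases mul_eq_zero.mp this with h' | h'
    · exact h'
    · linarith
  -- On the interior, sin (α y) = 0 and α has derivative 1
  have hsin : ∀ y ∈ Ioo s x₁, sin (α y) = 0 ∧ HasDerivAt α 1 y := by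
    intro y hy
    have hyI : Ioo s x₁ ∈ nhds y := Ioo_mem_nhds hy.1 hy.2
    have hev : f =ᶠ[nhds y] (fun _ => 0) := by
      filter_upwards [hyI] with t ht
      exact hfzero t (Ioo_subset_Icc_self ht)
    have hd0 : HasDerivAt f 0 y := by
      have : HasDerivAt (fun _ : ℝ => (0:ℝ)) 0 y := hasDerivAt_const y 0
      exact this.congr_of_eventuallyEq hev
    have hdy : d y = 0 := (hfd y).unique hd0
    have hαβ : α y = β y := by
      have := hfzero y (Ioo_subset_Icc_self hy)
      simp only [hf] at this
      linarith
    have hsin0 : sin (α y) = 0 := by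
      have h3 : d y = (E' - E) * sin (α y) ^ 2 := by
        simp only [hd, prufG, hαβ]; ring
      rw [hdy] at h3
      have hsq : sin (α y) ^ 2 = 0 := by nlinarith [sq_nonneg (sin (α y))]
      exact pow_eq_zero_iff two_ne_zero |>.mp hsq
    refine ⟨hsin0, ?_⟩
    have : prufG V E y (α y) = 1 := by
      have hc : cos (α y) ^ 2 = 1 := by
        have := sin_sq_add_cos_sq (α y)
        rw [hsin0] at this; simpa using this
      simp [prufG, hc, hsin0]
    rw [← this]
    exact hα y
  -- α is locally constant in value set πℤ on the interior, contradiction with derivative 1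
  set y₀ : ℝ := s + (x₁ - s) / 3 with hy₀
  set y₁ : ℝ := s + 2 * (x₁ - s) / 3 with hy₁
  have hy₀I : y₀ ∈ Ioo s x₁ := by constructor <;> (simp only [hy₀]; nlinarith)
  have hy₁I : y₁ ∈ Ioo s x₁ := by constructor <;> (simp only [hy₁]; nlinarith)
  have hy₀₁ : y₀ < y₁ := by simp only [hy₀, hy₁]; nlinarith
  -- show α is constant on [y₀, y₁]
  have hconst : ∀ y ∈ Icc y₀ y₁, α y = α y₀ := by
    intro y hy
    by_contra hne
    have hyI : y ∈ Ioo s x₁ :=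
      ⟨lt_of_lt_of_le hy₀I.1 hy.1, lt_of_le_of_lt hy.2 hy₁I.2⟩
    -- both α y₀ and α y are multiples of π, and distinct, so |α y − α y₀| ≥ π
    obtain ⟨k₀, hk₀⟩ := Real.sin_eq_zero_iff.mp (hsin y₀ hy₀I).1
    obtain ⟨k, hk⟩ := Real.sin_eq_zero_iff.mp (hsin y hyI).1
    have hgap : π ≤ |α y - α y₀| := by
      rw [← hk, ← hk₀]
      have hkk : k ≠ k₀ := by
        intro hkk; apply hne; rw [← hk, ← hk₀, hkk]
      have : (k : ℝ) * π - k₀ * π = (k - k₀ : ℤ) * π := by push_cast; ring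
      rw [this, abs_mul, abs_of_pos Real.pi_pos]
      have habs : (1:ℝ) ≤ |((k - k₀ : ℤ) : ℝ)| := by
        have h0 : k - k₀ ≠ 0 := sub_ne_zero.mpr hkk
        exact_mod_cast Int.one_le_abs h0
      nlinarith [Real.pi_pos]
    -- IVT: α attains the value (α y₀) ± π/2 strictly between, contradiction
    have hcont : ContinuousOn α (uIcc y₀ y) := by
      apply Continuous.continuousOn
      rw [continuous_iff_continuousAt]; exact fun t => (hα t).continuousAt
    have hmem : α y₀ + (if α y₀ < α y then π/2 else -π/2) ∈ uIcc (α y₀) (α y) := by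
      rcases lt_or_ge (α y₀) (α y) with hlt | hle
      · simp only [if_pos hlt]
        rw [uIcc_of_le (le_of_lt hlt)]
        constructor
        · linarith [Real.pi_pos]
        · rw [abs_of_pos (by linarith : (0:ℝ) < α y - α y₀)] at hgap
          linarith [Real.pi_pos]
      · have hlt : α y < α y₀ := by
          rcases lt_or_eq_of_le hle with h' | h'
          · exact h'
          · exact absurd h' hne
        simp only [if_neg (not_lt.mpr hle)]
        rw [uIcc_of_ge (le_of_lt hlt)]
        constructor
        · rw [abs_of_neg (by linarith : α y - α y₀ < 0)] at hgap
          linarith [Real.pi_pos]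
        · linarith [Real.pi_pos]
    obtain ⟨t, htI, ht⟩ := intermediate_value_uIcc hcont hmem
    have htIoo : t ∈ Ioo s x₁ := by
      rcases le_total y₀ y with hl | hl
      · rw [uIcc_of_le hl] at htI
        exact ⟨lt_of_lt_of_le hy₀I.1 htI.1, lt_of_le_of_lt htI.2 hyI.2⟩
      · rw [uIcc_of_ge hl] at htI
        exact ⟨lt_of_lt_of_le hyI.1 htI.1, lt_of_le_of_lt htI.2 hy₀I.2⟩
    have hsint := (hsin t htIoo).1
    rw [ht] at hsint
    rcases lt_or_ge (α y₀) (α y) with hlt | hle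
    · simp only [if_pos hlt] at hsint
      rw [Real.sin_add] at hsint
      simp only [Real.sin_pi_div_two, Real.cos_pi_div_two] at hsint
      rw [(hsin y₀ hy₀I).1] at hsint
      have hcos : cos (α y₀) ^ 2 = 1 := by
        have := sin_sq_add_cos_sq (α y₀)
        rw [(hsin y₀ hy₀I).1] at this; simpa using this
      nlinarith
    · simp only [if_neg (not_lt.mpr hle)] at hsint
      rw [show α y₀ + -π/2 = α y₀ - π/2 by ring, Real.sin_sub] at hsint
      simp only [Real.sin_pi_div_two, Real.cos_pi_div_two] at hsint
      rw [(hsin y₀ hy₀I).1] at hsint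
      have hcos : cos (α y₀) ^ 2 = 1 := by
        have := sin_sq_add_cos_sq (α y₀)
        rw [(hsin y₀ hy₀I).1] at this; simpa using this
      nlinarith
  -- contradiction: α has derivative 1 at y₀ but is constant near y₀... need interior point
  set ym : ℝ := (y₀ + y₁) / 2 with hym
  have hymI : ym ∈ Ioo y₀ y₁ := by constructor <;> (simp only [hym]; linarith)
  have hev : α =ᶠ[nhds ym] (fun _ => α y₀) := by
    filter_upwards [Ioo_mem_nhds hymI.1 hymI.2] with t ht
    exact hconst t (Ioo_subset_Icc_self ht)
  have h0 : HasDerivAt α 0 ym := (hasDerivAt_const ym (α y₀)).congr_of_eventuallyEq hev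
  have h1 : HasDerivAt α 1 ym :=
    (hsin ym ⟨lt_trans hy₀I.1 hymI.1, lt_trans hymI.2 hy₁I.2⟩).2
  have : (1:ℝ) = 0 := h1.unique h0
  norm_num at this




/-- Once a function whose derivative is positive on a level set passes that level, it never
returns. -/
theorem barrier_aux {g G : ℝ → ℝ} {c : ℝ} (hg : ∀ x, HasDerivAt g (G x) x)
    (hpos : ∀ x, g x = c → 0 < G x) :
    ∀ x₀ x, x₀ < x → c ≤ g x₀ → c < g x := by
  have hgc : Continuous g := by
    rw [continuous_iff_continuousAt]; exact fun x => (hg x).continuousAt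
  -- main case : strict at the start
  have main : ∀ x₀ x, x₀ < x → c < g x₀ → c < g x := by
    intro x₀ x hlt h0
    by_contra hx
    push_neg at hx
    set T : Set ℝ := Icc x₀ x ∩ {y | g y ≤ c} with hT
    have hTc : IsClosed T := isClosed_Icc.inter (isClosed_le hgc continuous_const)
    have hTne : T.Nonempty := ⟨x, ⟨le_of_lt hlt, le_refl x⟩, hx⟩
    have hTbdd : BddBelow T := BddBelow.mono (fun y hy => hy.1) bddBelow_Icc
    set z : ℝ := sInf T with hz
    have hzT : z ∈ T := hTc.csInf_mem hTne hTbdd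
    have hx₀z : x₀ ≤ z := hzT.1.1
    have hx₀z' : x₀ ≠ z := by
      intro h; rw [← h] at hzT; exact absurd hzT.2 (not_le.mpr h0)
    have hx₀zlt : x₀ < z := lt_of_le_of_ne hx₀z hx₀z'
    have hIoo : ∀ y ∈ Ico x₀ z, c < g y := by
      intro y hy
      by_contra hge
      push_neg at hge
      have hyT : y ∈ T := ⟨⟨hy.1, le_trans (le_of_lt hy.2) hzT.1.2⟩, hge⟩
      exact absurd (csInf_le hTbdd hyT) (not_le.mpr hy.2)
    have hgz_ge : c ≤ g z := by
      have h1 : Tendsto g (nhdsWithin z (Iio z)) (nhds (g z)) :=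
        (hgc.continuousAt).continuousWithinAt.tendsto
      apply ge_of_tendsto h1
      filter_upwards [Ioo_mem_nhdsLT_of_mem (⟨hx₀zlt, le_refl z⟩ : z ∈ Ioc x₀ z)] with y hy
      exact le_of_lt (hIoo y ⟨le_of_lt hy.1, hy.2⟩)
    have hgz : g z = c := le_antisymm hzT.2 hgz_ge
    have hGz : 0 < G z := hpos z hgz
    -- slope contradiction from the left
    have hslope : Tendsto (slope g z) (nhdsWithin z (Iio z)) (nhds (G z)) := by
      have := hasDerivAt_iff_tendsto_slope.mp (hg z)
      exact this.mono_left (nhdsWithin_mono z fun y hy => ne_of_lt hy)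
    have h1 : ∀ᶠ y in nhdsWithin z (Iio z), 0 < slope g z y :=
      hslope.eventually (eventually_gt_nhds hGz)
    have h2 : ∀ᶠ y in nhdsWithin z (Iio z), slope g z y < 0 := by
      filter_upwards [Ioo_mem_nhdsLT_of_mem (⟨hx₀zlt, le_refl z⟩ : z ∈ Ioc x₀ z)] with y hy
      have hgy : c < g y := hIoo y ⟨le_of_lt hy.1, hy.2⟩
      rw [slope_def_field]
      apply div_neg_of_pos_of_neg
      · rw [hgz]; linarith
      · linarith [hy.2]
    have : ∀ᶠ y in nhdsWithin z (Iio z), False := by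
      filter_upwards [h1, h2] with y hy1 hy2; linarith
    rw [eventually_false_iff_eq_bot] at this
    exact (nhdsLT_neBot z).ne this
  intro x₀ x hlt h0
  rcases lt_or_eq_of_le h0 with h | h
  · exact main x₀ x hlt h
  · -- g x₀ = c, positive derivative pushes strictly above immediately after
    have hGx₀ : 0 < G x₀ := hpos x₀ h.symm
    have hslope : Tendsto (slope g x₀) (nhdsWithin x₀ (Ioi x₀)) (nhds (G x₀)) := by
      have := hasDerivAt_iff_tendsto_slope.mp (hg x₀)
      exact this.mono_left (nhdsWithin_mono x₀ fun y hy => ne_of_gt hy)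
    have h1 : ∀ᶠ y in nhdsWithin x₀ (Ioi x₀), 0 < slope g x₀ y :=
      hslope.eventually (eventually_gt_nhds hGx₀)
    have h2 : ∀ᶠ y in nhdsWithin x₀ (Ioi x₀), y < x :=
      eventually_nhdsWithin_of_eventually_nhds (Filter.Tendsto.eventually_lt_const hlt tendsto_id)
    have h3 : ∃ y, (0 < slope g x₀ y ∧ y < x) ∧ y ∈ Ioi x₀ := by
      have := (h1.and h2).and self_mem_nhdsWithin
      exact this.exists
    obtain ⟨y, ⟨hy1, hy2⟩, hy3⟩ := h3
    have hgy : c < g y := by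
      rw [slope_def_field] at hy1
      have hyx₀ : (0:ℝ) < y - x₀ := by simp only [mem_Ioi] at hy3; linarith
      have := mul_pos hy1 hyx₀
      rw [div_mul_cancel₀] at this
      · rw [h]; linarith
      · exact ne_of_gt hyx₀
    rcases lt_or_eq_of_le (le_of_lt hy2) with h' | h'
    · exact main y x hy2 hgy
    · rw [← h']; exact hgy

/-- Time-reversed comparison. -/
theorem pruf_compare_rev (hM : ∀ x, |V x| ≤ M) {E E' : ℝ} (hEE : E < E')
    {α β : ℝ → ℝ}
    (hα : ∀ x, HasDerivAt α (prufG V E x (α x)) x)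
    (hβ : ∀ x, HasDerivAt β (prufG V E' x (β x)) x)
    {s : ℝ} (hs : α s = β s) : ∀ x, x < s → β x < α x := by
  intro x hx
  set W : ℝ → ℝ := fun t => V (-t) with hW
  have hMW : ∀ t, |W t| ≤ M := fun t => hM (-t)
  set α' : ℝ → ℝ := fun t => -α (-t) with hα'
  set β' : ℝ → ℝ := fun t => -β (-t) with hβ'
  have key : ∀ (E₀ : ℝ) (γ : ℝ → ℝ), (∀ y, HasDerivAt γ (prufG V E₀ y (γ y)) y) →
      ∀ t, HasDerivAt (fun u => -γ (-u)) (prufG W E₀ t (-γ (-t))) t := by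
    intro E₀ γ hγ t
    have h1 : HasDerivAt (fun u : ℝ => γ (-u)) (-(prufG V E₀ (-t) (γ (-t)))) t := by
      have := (hγ (-t)).comp t (hasDerivAt_neg t)
      simpa [mul_comm, Function.comp_def] using this
    have h2 := h1.neg
    have h3 : prufG V E₀ (-t) (γ (-t)) = prufG W E₀ t (-γ (-t)) := by
      simp only [prufG, hW, Real.sin_neg, Real.cos_neg]
      ring
    rw [h3] at h2
    exact h2.congr_deriv (neg_neg _)
  have hcomp := pruf_compare hMW hEE (α := α') (β := β')
    (fun t => key E α hα t) (fun t => key E' β hβ t)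
    (s := -s) (by simp [hα', hβ', hs])
  have := hcomp (-x) (by linarith)
  simp only [hα', hβ', neg_neg] at this
  linarith


/-- Lipschitz dependence of the Prüfer angle on the energy. -/
theorem theta_E_lipschitz (hM : ∀ x, |V x| ≤ M) {a E₁ E₂ : ℝ} (ha : 0 ≤ a) :
    ∃ C : ℝ, 0 ≤ C ∧ ∀ E ∈ Icc E₁ E₂, ∀ E' ∈ Icc E₁ E₂, ∀ α β : ℝ → ℝ,
      (∀ x, HasDerivAt α (prufG V E x (α x)) x) →
      (∀ x, HasDerivAt β (prufG V E' x (β x)) x) →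
      α 0 = 0 → β 0 = 0 → |α a - β a| ≤ C * |E - E'| := by
  have hM0 : (0:ℝ) ≤ M := le_trans (abs_nonneg _) (hM 0)
  set K : ℝ := 2 * (1 + M + (|E₁| + |E₂|)) with hK
  have hK0 : 0 < K := by positivity
  have hexp1 : (1:ℝ) ≤ Real.exp (K * a) := by
    rw [show (1:ℝ) = Real.exp 0 by simp]
    exact Real.exp_le_exp.mpr (by positivity)
  refine ⟨(Real.exp (K * a) - 1) / K, div_nonneg (by linarith) hK0.le, ?_⟩
  intro E hE E' hE' α β hα hβ hα0 hβ0
  have habs : ∀ F : ℝ, F ∈ Icc E₁ E₂ → |F| ≤ |E₁| + |E₂| := by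
    intro F hF
    rw [abs_le]
    constructor
    · linarith [neg_abs_le E₁, hF.1, abs_nonneg E₂]
    · linarith [le_abs_self E₂, hF.2, abs_nonneg E₁]
  have hlip : ∀ x u v : ℝ, |prufG V E' x u - prufG V E' x v| ≤ K * |u - v| := by
    intro x u v
    calc |prufG V E' x u - prufG V E' x v| ≤ (2 * (1 + M + |E'|)) * |u - v| :=
          prufG_dist_le hM E' x u v
      _ ≤ K * |u - v| := by
          apply mul_le_mul_of_nonneg_right _ (abs_nonneg _)
          have := habs E' hE'
          simp only [hK]; linarith
  set f : ℝ → ℝ := fun x => β x - α x with hf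
  have hfd : ∀ x, HasDerivAt f (prufG V E' x (β x) - prufG V E x (α x)) x :=
    fun x => (hβ x).sub (hα x)
  have key := norm_le_gronwallBound_of_norm_deriv_right_le (δ := 0) (K := K)
    (ε := |E - E'|) (a := 0) (b := a)
    (f := f) (f' := fun x => prufG V E' x (β x) - prufG V E x (α x))
    (by
      apply Continuous.continuousOn
      rw [continuous_iff_continuousAt]; exact fun x => (hfd x).continuousAt)
    (fun t _ => (hfd t).hasDerivWithinAt)
    (by simp [hf, hα0, hβ0])
    (by
      intro t _
      have h1 : prufG V E' t (β t) - prufG V E t (α t)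
          = (prufG V E' t (β t) - prufG V E' t (α t)) + (E' - E) * sin (α t) ^ 2 := by
        simp only [prufG]; ring
      show ‖prufG V E' t (β t) - prufG V E t (α t)‖ ≤ K * ‖f t‖ + |E - E'|
      rw [Real.norm_eq_abs, h1]
      have h2 := hlip t (β t) (α t)
      have h3 : |(E' - E) * sin (α t) ^ 2| ≤ |E - E'| := by
        rw [abs_mul]
        have hs : |sin (α t) ^ 2| ≤ 1 := by
          rw [abs_of_nonneg (sq_nonneg _)]; exact Real.sin_sq_le_one _
        have : |E' - E| = |E - E'| := abs_sub_comm E' E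
        nlinarith [abs_nonneg (E' - E)]
      calc |(prufG V E' t (β t) - prufG V E' t (α t)) + (E' - E) * sin (α t) ^ 2|
          ≤ |prufG V E' t (β t) - prufG V E' t (α t)| + |(E' - E) * sin (α t) ^ 2| :=
            abs_add_le _ _
        _ ≤ K * |β t - α t| + |E - E'| := add_le_add h2 h3
        _ = K * ‖f t‖ + |E - E'| := by simp [hf, Real.norm_eq_abs]
    )
  have hfa := key a ⟨ha, le_refl a⟩
  rw [Real.norm_eq_abs] at hfa
  have hgb : gronwallBound 0 K |E - E'| (a - 0) = |E - E'| / K * (Real.exp (K * a) - 1) := by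
    rw [gronwallBound_of_K_ne_0 (ne_of_gt hK0)]
    simp
  rw [hgb] at hfa
  have : |α a - β a| = |f a| := by simp [hf, abs_sub_comm]
  rw [this]
  calc |f a| ≤ |E - E'| / K * (Real.exp (K * a) - 1) := hfa
    _ = (Real.exp (K * a) - 1) / K * |E - E'| := by ring

end RenOscAux


/-- `E` is a Dirichlet eigenvalue of `−d²/dx² + V` on `[0,a]`: there is a not-identically-zero
solution of `−u″ + Vu = Eu` on `[0,a]` with `u(0) = u(a) = 0`. -/
def IsDirichletEigenvalue (V : ℝ → ℝ) (a E : ℝ) : Prop :=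
  ∃ u : ℝ → ℝ, ContDiff ℝ 2 u ∧
    (∀ x ∈ Set.Icc 0 a, deriv (deriv u) x = (V x - E) * u x) ∧
    (∃ x ∈ Set.Icc 0 a, u x ≠ 0) ∧ u 0 = 0 ∧ u a = 0

/-- **finite-interval renormalized oscillation theorem.** Let `E₁ < E₂`, let
`u_j = u(·,E_j)` be the solutions with `u_j(0) = 0`, `u_j′(0) = 1`, let `a > 0` with
`u₂(a) = 0`, `u₁(a) ≠ 0`, and let `W = u₁u₂′ − u₁′u₂`. Then the number of Dirichlet
eigenvalues of `−d²/dx² + V` on `[0,a]` in `(E₁,E₂)` equals the number of zeros of `W` in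
`(0,a)`. -/
theorem renormalized_oscillation_finite_interval (V : ℝ → ℝ) (hVb : ∃ M, ∀ x, |V x| ≤ M)
    (hVc : Continuous V) (E₁ E₂ : ℝ) (hE : E₁ < E₂) (u₁ u₂ : ℝ → ℝ)
    (hu₁ : ContDiff ℝ 2 u₁) (hu₂ : ContDiff ℝ 2 u₂)
    (hode₁ : ∀ x, deriv (deriv u₁) x = (V x - E₁) * u₁ x)
    (hode₂ : ∀ x, deriv (deriv u₂) x = (V x - E₂) * u₂ x)
    (h₁0 : u₁ 0 = 0) (h₁0' : deriv u₁ 0 = 1) (h₂0 : u₂ 0 = 0) (h₂0' : deriv u₂ 0 = 1)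
    (a : ℝ) (ha : 0 < a) (h₂a : u₂ a = 0) (h₁a : u₁ a ≠ 0) :
    {E ∈ Ioo E₁ E₂ | IsDirichletEigenvalue V a E}.Finite ∧
    {x ∈ Ioo 0 a | u₁ x * deriv u₂ x - deriv u₁ x * u₂ x = 0}.Finite ∧
    {E ∈ Ioo E₁ E₂ | IsDirichletEigenvalue V a E}.ncard =
      {x ∈ Ioo 0 a | u₁ x * deriv u₂ x - deriv u₁ x * u₂ x = 0}.ncard := by
  obtain ⟨M, hM⟩ := hVb
  have hπ := Real.pi_pos
  choose Θ hΘ0 hΘd using fun E : ℝ => exists_pruferAngle hM hVc E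
  choose R hRpos hR0 hRc hW1 hW2 using fun E : ℝ => pruf_w hVc (hΘd E)
  have hΘc : ∀ E, Continuous (Θ E) := by
    intro E
    rw [continuous_iff_continuousAt]; exact fun x => (hΘd E x).continuousAt
  -- uniqueness: any solution is a multiple of the Prüfer solution
  have huniq : ∀ (E c : ℝ) (v v' : ℝ → ℝ), (∀ x, HasDerivAt v (v' x) x) →
      (∀ x ∈ Icc 0 a, HasDerivAt v' ((V x - E) * v x) x) → v 0 = 0 → v' 0 = c →
      ∀ x ∈ Icc 0 a, v x = c * (R E x * sin (Θ E x)) ∧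
        v' x = c * (R E x * cos (Θ E x)) := by
    intro E c v v' hv hv' hv0 hv0'
    apply ode2_unique hM (E := E) (a := a) (f := v)
      (g := fun y => c * (R E y * sin (Θ E y)))
      (f' := v') (g' := fun y => c * (R E y * cos (Θ E y))) hv
      (fun x => ((hW1 E x).const_mul c)) hv'
    · intro x _
      have := (hW2 E x).const_mul c
      exact this.congr_deriv (by ring)
    · rw [hv0, hΘ0]; simp
    · rw [hv0', hR0, hΘ0]; simp
  -- derivative facts from ContDiff 2
  have hCD : ∀ u : ℝ → ℝ, ContDiff ℝ 2 u → (∀ x, HasDerivAt u (deriv u x) x) ∧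
      (∀ x, HasDerivAt (deriv u) (deriv (deriv u) x) x) := by
    intro u hu
    have h2 : ContDiff ℝ (1 + 1) u := by norm_num; exact hu
    have hd := (contDiff_succ_iff_deriv.mp h2).2.2
    constructor
    · exact fun x => ((hu.differentiable (by norm_num)) x).hasDerivAt
    · exact fun x => ((hd.differentiable one_ne_zero) x).hasDerivAt
  -- u₁ and u₂ agree with the Prüfer solutions on [0,a]
  have hu₁w : ∀ x ∈ Icc 0 a, u₁ x = R E₁ x * sin (Θ E₁ x) ∧
      deriv u₁ x = R E₁ x * cos (Θ E₁ x) := by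
    intro x hx
    have h := huniq E₁ 1 u₁ (deriv u₁) (hCD u₁ hu₁).1
      (fun y _ => (hode₁ y) ▸ (hCD u₁ hu₁).2 y) h₁0 h₁0' x hx
    simpa using h
  have hu₂w : ∀ x ∈ Icc 0 a, u₂ x = R E₂ x * sin (Θ E₂ x) ∧
      deriv u₂ x = R E₂ x * cos (Θ E₂ x) := by
    intro x hx
    have h := huniq E₂ 1 u₂ (deriv u₂) (hCD u₂ hu₂).1
      (fun y _ => (hode₂ y) ▸ (hCD u₂ hu₂).2 y) h₂0 h₂0' x hx
    simpa using h
  -- positivity of the Prüfer angle at a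
  have hΦpos : ∀ E, 0 < Θ E a := by
    intro E
    apply barrier_aux (hΘd E) _ 0 a ha (le_of_eq (hΘ0 E).symm)
    intro x hx
    rw [hx]
    simp [prufG]
  -- strict monotonicity in energy
  have hΦmono : ∀ F F' : ℝ, F < F' → Θ F a < Θ F' a := by
    intro F F' h
    exact pruf_compare hM h (hΘd F) (hΘd F') (s := 0) (by rw [hΘ0, hΘ0]) a ha
  -- the angle at E₂ is a positive integer multiple of π
  have hsinθ₂ : sin (Θ E₂ a) = 0 := by
    have h := (hu₂w a ⟨ha.le, le_refl a⟩).1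
    rw [h₂a] at h
    rcases mul_eq_zero.mp h.symm with h' | h'
    · exact absurd h' (ne_of_gt (hRpos E₂ a))
    · exact h'
  obtain ⟨N, hN⟩ := Real.sin_eq_zero_iff.mp hsinθ₂
  have hsinθ₁ : sin (Θ E₁ a) ≠ 0 := by
    intro h
    apply h₁a
    rw [(hu₁w a ⟨ha.le, le_refl a⟩).1, h, mul_zero]
  have hN0R : (0:ℝ) < (N:ℝ) := by nlinarith [hΦpos E₂, hN]
  have hN0 : 0 < N := by exact_mod_cast hN0R
  set k₀ : ℤ := ⌊Θ E₁ a / π⌋ with hk₀def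
  have hk₀le : (k₀:ℝ) * π ≤ Θ E₁ a := by
    have h := Int.floor_le (Θ E₁ a / π)
    rw [← hk₀def] at h
    calc (k₀:ℝ) * π ≤ (Θ E₁ a / π) * π := by nlinarith
      _ = Θ E₁ a := div_mul_cancel₀ _ (ne_of_gt hπ)
  have hk₀lt : Θ E₁ a < ((k₀:ℝ) + 1) * π := by
    have h := Int.lt_floor_add_one (Θ E₁ a / π)
    rw [← hk₀def] at h
    calc Θ E₁ a = (Θ E₁ a / π) * π := (div_mul_cancel₀ _ (ne_of_gt hπ)).symm
      _ < ((k₀:ℝ) + 1) * π := by nlinarith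
  -- shifting the angle by kπ preserves the vector field
  have hshift : ∀ (E x t : ℝ) (k : ℤ), prufG V E x (t + k*π) = prufG V E x t := by
    intro E x t k
    have hs : sin (t + k*π) ^ 2 = sin t ^ 2 := by
      rw [Real.sin_add_int_mul_pi]
      rcases Int.even_or_odd k with hek | hok
      · rw [hek.neg_one_zpow]; ring
      · rw [hok.neg_one_zpow]; ring
    have hc : cos (t + k*π) ^ 2 = cos t ^ 2 := by
      rw [Real.cos_sq', Real.cos_sq', hs]
    simp only [prufG]
    rw [hs, hc]
  -- the renormalized angle crosses each level kπ at most once, upwards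
  have hψcross : ∀ (k : ℤ) (x : ℝ), Θ E₂ x - Θ E₁ x = k*π →
      (∀ y, x < y → (k:ℝ)*π < Θ E₂ y - Θ E₁ y) ∧
      (∀ y, y < x → Θ E₂ y - Θ E₁ y < (k:ℝ)*π) := by
    intro k x hx
    have hηd : ∀ t, HasDerivAt (fun s => Θ E₁ s + (k:ℝ)*π)
        (prufG V E₁ t (Θ E₁ t + (k:ℝ)*π)) t := by
      intro t
      rw [hshift E₁ t (Θ E₁ t) k]
      exact (hΘd E₁ t).add_const ((k:ℝ)*π)
    have hsx : (fun s => Θ E₁ s + (k:ℝ)*π) x = Θ E₂ x := by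
      simp only []
      linarith
    constructor
    · intro y hy
      have := pruf_compare hM hE hηd (hΘd E₂) (s := x) hsx y hy
      beta_reduce at this
      linarith
    · intro y hy
      have := pruf_compare_rev hM hE hηd (hΘd E₂) (s := x) hsx y hy
      beta_reduce at this
      linarith
  have hψ0 : Θ E₂ 0 - Θ E₁ 0 = (0:ℤ)*π := by rw [hΘ0, hΘ0]; simp
  have hψpos : ∀ x, 0 < x → 0 < Θ E₂ x - Θ E₁ x := by
    intro x hx
    have := (hψcross 0 0 hψ0).1 x hx
    simpa using this
  -- derivative formulas for the Prüfer solutions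
  have hd1 : ∀ E : ℝ, deriv (fun y => R E y * sin (Θ E y)) = fun y => R E y * cos (Θ E y) :=
    fun E => funext fun x => (hW1 E x).deriv
  have hd2 : ∀ E : ℝ, deriv (fun y => R E y * cos (Θ E y))
      = fun y => (V y - E) * (R E y * sin (Θ E y)) :=
    fun E => funext fun x => (hW2 E x).deriv
  have hwC : ∀ E : ℝ, ContDiff ℝ 2 (fun y => R E y * sin (Θ E y)) := by
    intro E
    have h11 : ContDiff ℝ (1+1) (fun y => R E y * sin (Θ E y)) := by
      rw [contDiff_succ_iff_deriv]
      refine ⟨fun x => (hW1 E x).differentiableAt, by simp, ?_⟩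
      rw [hd1 E, contDiff_one_iff_deriv]
      refine ⟨fun x => (hW2 E x).differentiableAt, ?_⟩
      rw [hd2 E]
      exact ((hVc.sub continuous_const).mul
        ((hRc E).mul (Real.continuous_sin.comp (hΘc E))))
    norm_num at h11
    exact h11
  -- eigenvalue characterization
  have heig : ∀ E ∈ Ioo E₁ E₂, (IsDirichletEigenvalue V a E ↔ sin (Θ E a) = 0) := by
    intro E hEI
    constructor
    · rintro ⟨v, hvC, hvode, ⟨xv, hxvI, hxv⟩, hv0, hva⟩
      have hvd := (hCD v hvC).1
      have hvd2 := (hCD v hvC).2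
      have hvw := huniq E (deriv v 0) v (deriv v) hvd
        (fun y hy => (hvode y hy) ▸ hvd2 y) hv0 rfl
      by_cases hc : deriv v 0 = 0
      · exfalso
        have h := (hvw xv hxvI).1
        rw [hc, zero_mul] at h
        exact hxv h
      · have h := (hvw a ⟨ha.le, le_refl a⟩).1
        rw [hva] at h
        rcases mul_eq_zero.mp h.symm with h' | h'
        · exact absurd h' hc
        · rcases mul_eq_zero.mp h' with h'' | h''
          · exact absurd h'' (ne_of_gt (hRpos E a))
          · exact h''
    · intro hsin
      obtain ⟨k, hk⟩ := Real.sin_eq_zero_iff.mp hsin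
      have hk1R : (1:ℝ) ≤ (k:ℝ) := by
        have h0 : (0:ℝ) < (k:ℝ)*π := by rw [hk]; exact hΦpos E
        have h1 : (0:ℝ) < (k:ℝ) := by nlinarith
        have h2 : 0 < k := by exact_mod_cast h1
        exact_mod_cast h2
      refine ⟨fun y => R E y * sin (Θ E y), hwC E, ?_, ?_, ?_, ?_⟩
      · intro x _
        rw [hd1 E, hd2 E]
      · have hcont := (hΘc E).continuousOn (s := Icc 0 a)
        have hmem : π/2 ∈ Icc (Θ E 0) (Θ E a) := by
          rw [hΘ0]
          constructor
          · positivity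
          · rw [← hk]; nlinarith
        obtain ⟨t, htI, ht⟩ := intermediate_value_Icc ha.le hcont hmem
        refine ⟨t, htI, ?_⟩
        show R E t * sin (Θ E t) ≠ 0
        have ht' : Θ E t = π/2 := ht
        rw [ht', Real.sin_pi_div_two, mul_one]
        exact ne_of_gt (hRpos E t)
      · show R E 0 * sin (Θ E 0) = 0
        rw [hΘ0]; simp
      · show R E a * sin (Θ E a) = 0
        rw [hsin, mul_zero]
  -- Wronskian zero iff renormalized angle at multiple of π
  have hBiff : ∀ x ∈ Ioo (0:ℝ) a,
      (u₁ x * deriv u₂ x - deriv u₁ x * u₂ x = 0 ↔ sin (Θ E₂ x - Θ E₁ x) = 0) := by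
    intro x hx
    have hxI : x ∈ Icc 0 a := Ioo_subset_Icc_self hx
    obtain ⟨h1, h1'⟩ := hu₁w x hxI
    obtain ⟨h2, h2'⟩ := hu₂w x hxI
    rw [h1, h1', h2, h2']
    have hkey : R E₁ x * sin (Θ E₁ x) * (R E₂ x * cos (Θ E₂ x))
        - R E₁ x * cos (Θ E₁ x) * (R E₂ x * sin (Θ E₂ x))
        = -(R E₁ x * R E₂ x) * sin (Θ E₂ x - Θ E₁ x) := by
      rw [Real.sin_sub]
      ring
    rw [hkey]
    constructor
    · intro h
      rcases mul_eq_zero.mp h with h' | h'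
      · exfalso
        have := mul_pos (hRpos E₁ x) (hRpos E₂ x)
        rw [neg_eq_zero] at h'
        linarith [h', this]
      · exact h'
    · intro h
      rw [h, mul_zero]
  -- continuity of the angle in the energy
  obtain ⟨C, hC0, hC⟩ := theta_E_lipschitz hM (E₁ := E₁) (E₂ := E₂) ha.le
  have hΦcont : ContinuousOn (fun E => Θ E a) (Icc E₁ E₂) := by
    apply LipschitzOnWith.continuousOn (K := C.toNNReal)
    rw [lipschitzOnWith_iff_dist_le_mul]
    intro F hF F' hF'
    rw [Real.dist_eq, Real.dist_eq, Real.coe_toNNReal _ hC0]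
    exact hC F hF F' hF' (Θ F) (Θ F') (hΘd F) (hΘd F') (hΘ0 F) (hΘ0 F')
  have hψc : Continuous (fun x => Θ E₂ x - Θ E₁ x) := (hΘc E₂).sub (hΘc E₁)
  -- the image of the eigenvalue set under the index map
  have hroundE : ∀ (t : ℝ) (k : ℤ), (k:ℝ)*π = t → round (t / π) = k := by
    intro t k hk
    rw [← hk, mul_div_cancel_right₀ _ (ne_of_gt hπ), round_intCast]
  have himA : (fun E => round (Θ E a / π)) '' {E ∈ Ioo E₁ E₂ | IsDirichletEigenvalue V a E}
      = ↑(Finset.Ioo k₀ N) := by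
    ext k
    simp only [mem_image, Finset.coe_Ioo, mem_Ioo, mem_sep_iff]
    constructor
    · rintro ⟨E, ⟨hEI, hEig⟩, rfl⟩
      obtain ⟨k', hk'⟩ := Real.sin_eq_zero_iff.mp ((heig E hEI).mp hEig)
      rw [hroundE _ _ hk']
      constructor
      · apply Int.floor_lt.mpr
        rw [div_lt_iff₀ hπ]
        calc Θ E₁ a < Θ E a := hΦmono E₁ E hEI.1
          _ = k' * π := hk'.symm
      · have h1 : (k':ℝ) * π < (N:ℝ) * π := by
          rw [hk', hN]
          exact hΦmono E E₂ hEI.2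
        have : (k':ℝ) < (N:ℝ) := by nlinarith
        exact_mod_cast this
    · rintro ⟨hk₀k, hkN⟩
      have h1 : Θ E₁ a < (k:ℝ)*π := by
        have hcast : ((k₀:ℝ) + 1) ≤ (k:ℝ) := by exact_mod_cast hk₀k
        nlinarith
      have h2 : (k:ℝ)*π < Θ E₂ a := by
        rw [← hN]
        have hcast : (k:ℝ) < (N:ℝ) := by exact_mod_cast hkN
        nlinarith
      obtain ⟨E, hEIoo, hΦE⟩ := intermediate_value_Ioo hE.le hΦcont ⟨h1, h2⟩
      have hΦE' : Θ E a = (k:ℝ)*π := hΦE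
      refine ⟨E, ⟨hEIoo, ?_⟩, ?_⟩
      · apply (heig E hEIoo).mpr
        rw [hΦE']
        exact Real.sin_int_mul_pi k
      · exact hroundE _ _ hΦE'.symm
  have hinjA : InjOn (fun E => round (Θ E a / π))
      {E ∈ Ioo E₁ E₂ | IsDirichletEigenvalue V a E} := by
    intro E hEA E' hE'A hfeq
    obtain ⟨kE, hkE⟩ := Real.sin_eq_zero_iff.mp ((heig E hEA.1).mp hEA.2)
    obtain ⟨kE', hkE'⟩ := Real.sin_eq_zero_iff.mp ((heig E' hE'A.1).mp hE'A.2)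
    have h1 : round (Θ E a / π) = kE := hroundE _ _ hkE
    have h2 : round (Θ E' a / π) = kE' := hroundE _ _ hkE'
    simp only [] at hfeq
    have hkk : kE = kE' := by rw [← h1, ← h2, hfeq]
    have hΘeq : Θ E a = Θ E' a := by rw [← hkE, ← hkE', hkk]
    rcases lt_trichotomy E E' with h | h | h
    · exact absurd hΘeq (ne_of_lt (hΦmono E E' h))
    · exact h
    · exact absurd hΘeq (ne_of_gt (hΦmono E' E h))
  -- the image of the Wronskian zero set under the index map
  have himB : (fun x => round ((Θ E₂ x - Θ E₁ x) / π)) ''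
      {x ∈ Ioo 0 a | u₁ x * deriv u₂ x - deriv u₁ x * u₂ x = 0}
      = ↑(Finset.Ioo 0 (N - k₀)) := by
    ext k
    simp only [mem_image, Finset.coe_Ioo, mem_Ioo, mem_sep_iff]
    constructor
    · rintro ⟨x, ⟨hxI, hxW⟩, rfl⟩
      obtain ⟨k', hk'⟩ := Real.sin_eq_zero_iff.mp ((hBiff x hxI).mp hxW)
      rw [hroundE _ _ hk']
      constructor
      · have h0 : (0:ℝ) < (k':ℝ)*π := by
          rw [hk']
          exact hψpos x hxI.1
        have : (0:ℝ) < (k':ℝ) := by nlinarith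
        exact_mod_cast this
      · have hgt := (hψcross k' x hk'.symm).1 a hxI.2
        have h1 : (k':ℝ) < ((N - k₀ : ℤ):ℝ) := by
          push_cast
          nlinarith [hgt, hk₀le, hN]
        exact_mod_cast h1
    · rintro ⟨h0k, hkNk₀⟩
      have h0kR : (0:ℝ) < (k:ℝ) := by exact_mod_cast h0k
      have h1 : (0:ℝ) < (k:ℝ)*π := by nlinarith
      have h2 : (k:ℝ)*π < Θ E₂ a - Θ E₁ a := by
        have hcast : (k:ℝ) ≤ (N:ℝ) - (k₀:ℝ) - 1 := by
          have hz : k ≤ N - k₀ - 1 := by omega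
          have hzr : (k:ℝ) ≤ ((N - k₀ - 1 : ℤ) : ℝ) := by exact_mod_cast hz
          push_cast at hzr
          linarith
        nlinarith [hk₀lt, hN]
      have hmem : (k:ℝ)*π ∈ Ioo ((fun x => Θ E₂ x - Θ E₁ x) 0) ((fun x => Θ E₂ x - Θ E₁ x) a) := by
        constructor
        · show Θ E₂ 0 - Θ E₁ 0 < (k:ℝ)*π
          rw [hΘ0, hΘ0]
          simpa using h1
        · exact h2
      obtain ⟨x, hxI, hx⟩ := intermediate_value_Ioo ha.le hψc.continuousOn hmem
      refine ⟨x, ⟨hxI, ?_⟩, hroundE _ _ hx.symm⟩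
      apply (hBiff x hxI).mpr
      rw [show Θ E₂ x - Θ E₁ x = (k:ℝ)*π from hx]
      exact Real.sin_int_mul_pi k
  have hinjB : InjOn (fun x => round ((Θ E₂ x - Θ E₁ x) / π))
      {x ∈ Ioo 0 a | u₁ x * deriv u₂ x - deriv u₁ x * u₂ x = 0} := by
    intro x hxB x' hx'B hfeq
    obtain ⟨kx, hkx⟩ := Real.sin_eq_zero_iff.mp ((hBiff x hxB.1).mp hxB.2)
    obtain ⟨kx', hkx'⟩ := Real.sin_eq_zero_iff.mp ((hBiff x' hx'B.1).mp hx'B.2)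
    have h1 : round ((Θ E₂ x - Θ E₁ x) / π) = kx := hroundE _ _ hkx
    have h2 : round ((Θ E₂ x' - Θ E₁ x') / π) = kx' := hroundE _ _ hkx'
    simp only [] at hfeq
    have hkk : kx = kx' := by rw [← h1, ← h2, hfeq]
    have hψeq : Θ E₂ x - Θ E₁ x = Θ E₂ x' - Θ E₁ x' := by rw [← hkx, ← hkx', hkk]
    rcases lt_trichotomy x x' with h | h | h
    · exfalso
      have := (hψcross kx x hkx.symm).1 x' h
      rw [← hψeq, ← hkx] at this
      exact lt_irrefl _ this
    · exact h
    · exfalso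
      have := (hψcross kx' x' hkx'.symm).1 x h
      rw [hψeq, ← hkx'] at this
      exact lt_irrefl _ this
  have hAfin : Set.Finite {E ∈ Ioo E₁ E₂ | IsDirichletEigenvalue V a E} :=
    Set.Finite.of_finite_image (himA ▸ (Finset.Ioo k₀ N).finite_toSet) hinjA
  have hBfin : Set.Finite {x ∈ Ioo 0 a | u₁ x * deriv u₂ x - deriv u₁ x * u₂ x = 0} :=
    Set.Finite.of_finite_image (himB ▸ (Finset.Ioo 0 (N - k₀)).finite_toSet) hinjB
  refine ⟨hAfin, hBfin, ?_⟩
  have hA : {E ∈ Ioo E₁ E₂ | IsDirichletEigenvalue V a E}.ncard = (Finset.Ioo k₀ N).card := by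
    calc {E ∈ Ioo E₁ E₂ | IsDirichletEigenvalue V a E}.ncard
        = ((fun E => round (Θ E a / π)) '' {E ∈ Ioo E₁ E₂ | IsDirichletEigenvalue V a E}).ncard :=
          (Set.ncard_image_of_injOn hinjA).symm
      _ = (Finset.Ioo k₀ N).card := by rw [himA, Set.ncard_coe_finset]
  have hB : {x ∈ Ioo 0 a | u₁ x * deriv u₂ x - deriv u₁ x * u₂ x = 0}.ncard
      = (Finset.Ioo 0 (N - k₀)).card := by
    calc {x ∈ Ioo 0 a | u₁ x * deriv u₂ x - deriv u₁ x * u₂ x = 0}.ncard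
        = ((fun x => round ((Θ E₂ x - Θ E₁ x) / π)) ''
            {x ∈ Ioo 0 a | u₁ x * deriv u₂ x - deriv u₁ x * u₂ x = 0}).ncard :=
          (Set.ncard_image_of_injOn hinjB).symm
      _ = (Finset.Ioo 0 (N - k₀)).card := by rw [himB, Set.ncard_coe_finset]
  rw [hA, hB, Int.card_Ioo, Int.card_Ioo]
  norm_num
end

section
/- (Bargmann's bound, oscillation form) Let V : [0,∞) → ℝ be bounded, continuous, and satisfy V(x) ≤ 0 for all x ≥ 0, with ∫₀^∞ x|V(x)| dx < ∞. Let u be the solution of −u″ + Vu = 0 on [0,∞) with u(0) = 0 and u′(0) = 1. Then the number of zeros of u in (0,∞) is at most ∫₀^∞ x|V(x)| dx. (By the Sturm oscillation theorem, this bounds the number of negative Dirichlet eigenvalues of −d²/dx² + V on the half-line.) -/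
open Set MeasureTheory intervalIntegral

private lemma bb_ftc (f : ℝ → ℝ) (hf : Continuous f) (c x : ℝ) :
    HasDerivAt (fun y => ∫ s in c..y, f s) (f x) x :=
  integral_hasDerivAt_right (hf.intervalIntegrable c x)
    (hf.stronglyMeasurableAtFilter _ _) hf.continuousAt

/-- A differentiable function with zero derivative on `[0,∞)` is constant there. -/
private lemma bb_const (f : ℝ → ℝ) (hf : Differentiable ℝ f)
    (h' : ∀ x ∈ Ici (0:ℝ), deriv f x = 0) {c x : ℝ} (hc : c ∈ Ici (0:ℝ))
    (hx : x ∈ Ici (0:ℝ)) : f x = f c := by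
  refine (convex_Ici (0:ℝ)).is_const_of_fderivWithin_eq_zero hf.differentiableOn
    (fun z hz => ?_) hx hc
  have h1 : HasDerivAt f 0 z := by
    have := (hf z).hasDerivAt
    rwa [h' z hz] at this
  have h2 : HasFDerivAt f (0 : ℝ →L[ℝ] ℝ) z := by
    convert h1.hasFDerivAt using 1
    ext
    simp
    rw [ContinuousLinearMap.toSpanSingleton_zero]
  rw [h2.hasFDerivWithinAt.fderivWithin (uniqueDiffOn_Ici 0 z hz)]

/-- Taylor-type representation of a solution of `u'' = V u` on `[0,∞)`. -/
private lemma bb_rep (V u : ℝ → ℝ) (hVc : Continuous V) (hu : ContDiff ℝ 2 u)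
    (hode : ∀ x ∈ Ici (0 : ℝ), deriv (deriv u) x = V x * u x)
    {c x : ℝ} (hc : 0 ≤ c) (hx : 0 ≤ x) :
    u x = u c + deriv u c * (x - c) + ∫ s in c..x, (x - s) * (V s * u s) := by
  have hVu : Continuous (fun s => V s * u s) := hVc.mul hu.continuous
  have hsVu : Continuous (fun s => s * (V s * u s)) := continuous_id.mul hVu
  have hu1 : ContDiff ℝ 1 (deriv u) :=
    (contDiff_succ_iff_deriv.mp (by exact_mod_cast hu : ContDiff ℝ (1+1) u)).2.2
  have hud : Differentiable ℝ u := hu.differentiable (by norm_num)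
  have hud2 : Differentiable ℝ (deriv u) := hu1.differentiable (by norm_num)
  set g1 : ℝ → ℝ := fun y => deriv u c + ∫ s in c..y, V s * u s with hg1def
  set g : ℝ → ℝ := fun y => u c + deriv u c * (y - c) +
      (y * (∫ s in c..y, V s * u s) - (∫ s in c..y, s * (V s * u s))) with hgdef
  have hg1d : ∀ y, HasDerivAt g1 (V y * u y) y := fun y =>
    (bb_ftc _ hVu c y).const_add _
  have hgd : ∀ y, HasDerivAt g (g1 y) y := by
    intro y
    have h1 : HasDerivAt (fun y : ℝ => u c + deriv u c * (y - c)) (deriv u c) y := by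
      have h0 := (((hasDerivAt_id y).sub_const c).const_mul (deriv u c)).const_add (u c)
      refine h0.congr_deriv ?_
      simp
    have h2 : HasDerivAt (fun y : ℝ => y * (∫ s in c..y, V s * u s))
        (1 * (∫ s in c..y, V s * u s) + y * (V y * u y)) y :=
      (hasDerivAt_id y).mul (bb_ftc _ hVu c y)
    have h3 := bb_ftc _ hsVu c y
    have h4 := h1.add (h2.sub h3)
    simp only [hgdef, hg1def]
    refine h4.congr_deriv ?_
    ring
  -- first order: deriv u = g1 on Ici 0
  have hstep1 : ∀ y ∈ Ici (0:ℝ), deriv u y = g1 y := by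
    intro y hy
    have hzero : ∀ z ∈ Ici (0:ℝ), deriv (fun w => deriv u w - g1 w) z = 0 := by
      intro z hz
      have : HasDerivAt (fun w => deriv u w - g1 w) (deriv (deriv u) z - V z * u z) z :=
        (hud2 z).hasDerivAt.sub (hg1d z)
      rw [this.deriv, hode z hz, sub_self]
    have hconst := bb_const (fun w => deriv u w - g1 w)
      (fun z => (hud2 z).sub (hg1d z).differentiableAt) hzero hc hy
    have hcc : deriv u c - g1 c = 0 := by simp [hg1def]
    have h5 := hconst.trans hcc
    simp only [sub_eq_zero] at h5
    exact h5
  -- zeroth order: u = g on Ici 0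
  have hstep2 : u x = g x := by
    have hzero : ∀ z ∈ Ici (0:ℝ), deriv (fun w => u w - g w) z = 0 := by
      intro z hz
      have : HasDerivAt (fun w => u w - g w) (deriv u z - g1 z) z :=
        (hud z).hasDerivAt.sub (hgd z)
      rw [this.deriv, hstep1 z hz, sub_self]
    have hconst := bb_const (fun w => u w - g w)
      (fun z => (hud z).sub (hgd z).differentiableAt) hzero hc hx
    have hcc : u c - g c = 0 := by simp [hgdef]
    have h5 := hconst.trans hcc
    simp only [sub_eq_zero] at h5
    exact h5
  rw [hstep2]
  have hint1 : IntervalIntegrable (fun s => V s * u s) volume c x := hVu.intervalIntegrable c x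
  have hint2 : IntervalIntegrable (fun s => s * (V s * u s)) volume c x :=
    hsVu.intervalIntegrable c x
  have hsplit : (∫ s in c..x, (x - s) * (V s * u s)) =
      x * (∫ s in c..x, V s * u s) - ∫ s in c..x, s * (V s * u s) := by
    have h1 : (∫ s in c..x, (x - s) * (V s * u s)) =
        ∫ s in c..x, (x * (V s * u s) - s * (V s * u s)) := by
      apply intervalIntegral.integral_congr
      intro s _
      ring
    rw [h1, intervalIntegral.integral_sub (f := fun s => x * (V s * u s)) ((continuous_const.mul hVu).intervalIntegrable c x) hint2,
      intervalIntegral.integral_const_mul]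
  rw [hsplit]

/-- If `u` vanishes on `[p,q]` and is differentiable, its derivative vanishes at `p`. -/
private lemma bb_deriv_zero_left (u : ℝ → ℝ) {p q : ℝ} (hpq : p < q)
    (hd : DifferentiableAt ℝ u p) (hz : ∀ x ∈ Icc p q, u x = 0) : deriv u p = 0 := by
  have hmem : p ∈ Icc p q := ⟨le_rfl, hpq.le⟩
  have h1 : HasDerivWithinAt u (deriv u p) (Icc p q) p := hd.hasDerivAt.hasDerivWithinAt
  have h2 : HasDerivWithinAt u 0 (Icc p q) p :=
    (hasDerivWithinAt_const p (Icc p q) (0:ℝ)).congr (fun x hx => hz x hx) (hz p hmem)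
  have hu1 := h1.derivWithin ((uniqueDiffOn_Icc hpq) p hmem)
  have hu2 := h2.derivWithin ((uniqueDiffOn_Icc hpq) p hmem)
  rw [← hu1, hu2]

/-- Every zero of `u` in `[0,∞)` is simple. -/
private lemma bb_simple (V u : ℝ → ℝ) (hVb : ∃ M, ∀ x, |V x| ≤ M) (hVc : Continuous V)
    (hu : ContDiff ℝ 2 u)
    (hode : ∀ x ∈ Ici (0 : ℝ), deriv (deriv u) x = V x * u x)
    (h0' : deriv u 0 = 1) {a : ℝ} (ha : 0 ≤ a) (hua : u a = 0) :
    deriv u a ≠ 0 := by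
  intro hua'
  obtain ⟨M, hM⟩ := hVb
  have hM0 : 0 ≤ M := le_trans (abs_nonneg _) (hM 0)
  set δ : ℝ := 1 / (M + 1) with hδdef
  have hδpos : 0 < δ := by positivity
  have hδ1 : δ * (M + 1) = 1 := by
    rw [hδdef]; field_simp
  have hδsmall : δ * δ * M < 1 := by nlinarith
  have hud : Differentiable ℝ u := hu.differentiable (by norm_num)
  -- propagation step: zeros propagate a distance δ to the left
  have step : ∀ c : ℝ, 0 ≤ c → u c = 0 → deriv u c = 0 →
      ∀ x ∈ Icc (max (c - δ) 0) c, u x = 0 := by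
    intro c hc huc huc'
    set p : ℝ := max (c - δ) 0 with hpdef
    have hpc : p ≤ c := max_le (by linarith) hc
    have hK : IsCompact (Icc p c) := isCompact_Icc
    obtain ⟨c₀, hc₀K, hc₀max⟩ := hK.exists_isMaxOn (nonempty_Icc.mpr hpc)
      ((continuous_abs.comp hu.continuous).continuousOn)
    set m : ℝ := |u c₀| with hmdef
    have hm0 : 0 ≤ m := abs_nonneg _
    have hc₀0 : (0:ℝ) ≤ c₀ := le_trans (le_max_right _ _) hc₀K.1
    have hmax : ∀ y ∈ Icc p c, |u y| ≤ m := fun y hy => hc₀max hy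
    -- representation at c₀
    have hrep := bb_rep V u hVc hu hode hc hc₀0
    rw [huc, huc'] at hrep
    simp only [zero_mul, zero_add] at hrep
    have hrep2 : u c₀ = -∫ s in c₀..c, (c₀ - s) * (V s * u s) := by
      rw [hrep, intervalIntegral.integral_symm]
    -- bound the integral
    have hm_eq : m = |∫ s in c₀..c, (c₀ - s) * (V s * u s)| := by
      rw [hmdef, hrep2, abs_neg]
    have habs : m ≤ δ * (M * m) * (c - c₀) := by
      nth_rewrite 1 [hm_eq]
      calc |∫ s in c₀..c, (c₀ - s) * (V s * u s)|
          ≤ ∫ s in c₀..c, |(c₀ - s) * (V s * u s)| :=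
            intervalIntegral.abs_integral_le_integral_abs hc₀K.2
        _ ≤ ∫ _s in c₀..c, δ * (M * m) := by
            apply intervalIntegral.integral_mono_on hc₀K.2
              (((continuous_const.sub continuous_id).mul
                (hVc.mul hu.continuous)).abs.intervalIntegrable _ _)
              intervalIntegrable_const
            intro s hs
            simp only [Pi.mul_apply, Pi.sub_apply, id_eq]
            rw [abs_mul, abs_mul]
            have h1 : |c₀ - s| ≤ δ := by
              rw [abs_sub_comm, abs_of_nonneg (by linarith [hs.1])]
              have : c - δ ≤ p := le_max_left _ _
              linarith [hs.2, hc₀K.1]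
            have h2 : |V s| ≤ M := hM s
            have h3 : |u s| ≤ m := hmax s ⟨le_trans hc₀K.1 hs.1, hs.2⟩
            have := mul_le_mul h2 h3 (abs_nonneg _) hM0
            exact mul_le_mul h1 this (by positivity) hδpos.le
        _ = δ * (M * m) * (c - c₀) := by
            rw [intervalIntegral.integral_const, smul_eq_mul]
            ring
    have hcc₀ : c - c₀ ≤ δ := by
      have : c - δ ≤ p := le_max_left _ _
      linarith [hc₀K.1]
    have hmz : m = 0 := by
      by_contra hne
      have hmpos : 0 < m := lt_of_le_of_ne hm0 (Ne.symm hne)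
      have h6 : δ * (M * m) * (c - c₀) ≤ δ * (M * m) * δ :=
        mul_le_mul_of_nonneg_left hcc₀ (by positivity)
      nlinarith
    intro x hx
    have hx' := hmax x hx
    rw [hmz] at hx'
    exact abs_eq_zero.mp (le_antisymm hx' (abs_nonneg _))
  -- iterate the propagation step
  have main : ∀ n : ℕ, u (max (a - n * δ) 0) = 0 ∧ deriv u (max (a - n * δ) 0) = 0 := by
    intro n
    induction n with
    | zero =>
      have : max (a - (0:ℕ) * δ) 0 = a := by
        push_cast
        rw [zero_mul, sub_zero, max_eq_left ha]
      rw [this]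
      exact ⟨hua, hua'⟩
    | succ n ih =>
      obtain ⟨ih1, ih2⟩ := ih
      have hcmn : max (a - (n+1 : ℕ) * δ) 0 ≤ max (a - n * δ) 0 := by
        apply max_le_max _ le_rfl
        push_cast
        nlinarith
      have hlow : max (max (a - n * δ) 0 - δ) 0 ≤ max (a - (n+1 : ℕ) * δ) 0 := by
        apply max_le _ (le_max_right _ _)
        rcases le_total (a - n * δ) 0 with h | h
        · rw [max_eq_right h]
          have := le_max_right (a - (n+1 : ℕ) * δ) 0
          linarith
        · rw [max_eq_left h]
          have := le_max_left (a - (n+1 : ℕ) * δ) 0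
          push_cast
          push_cast at this
          linarith
      have hzeros := step (max (a - n * δ) 0) (le_max_right _ _) ih1 ih2
      have h1 : u (max (a - (n+1 : ℕ) * δ) 0) = 0 := hzeros _ ⟨hlow, hcmn⟩
      refine ⟨h1, ?_⟩
      rcases eq_or_lt_of_le hcmn with heq | hlt
      · rw [heq]
        exact ih2
      · refine bb_deriv_zero_left u hlt (hud _) ?_
        intro x hx
        exact hzeros x ⟨le_trans hlow hx.1, hx.2⟩
  -- a large n forces deriv u 0 = 0
  obtain ⟨h1, h2⟩ := main ⌈a / δ⌉₊
  have hn : a - (⌈a / δ⌉₊ : ℝ) * δ ≤ 0 := by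
    have h3 : a / δ ≤ (⌈a / δ⌉₊ : ℝ) := Nat.le_ceil _
    rw [div_le_iff₀ hδpos] at h3
    linarith
  rw [max_eq_right hn] at h2
  rw [h0'] at h2
  exact one_ne_zero h2

/-- Between two zeros of `u` in `[0,∞)` the integral of `s ↦ s * |V s|` is at least 1. -/
private lemma bb_key (V u : ℝ → ℝ) (hVb : ∃ M, ∀ x, |V x| ≤ M) (hVc : Continuous V)
    (hu : ContDiff ℝ 2 u)
    (hode : ∀ x ∈ Ici (0 : ℝ), deriv (deriv u) x = V x * u x)
    (h0' : deriv u 0 = 1) {a b : ℝ} (ha : 0 ≤ a) (hab : a < b)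
    (hua : u a = 0) (hub : u b = 0) : 1 ≤ ∫ s in a..b, s * |V s| := by
  have hud : Differentiable ℝ u := hu.differentiable (by norm_num)
  obtain ⟨c₀, hc₀K, hc₀max⟩ := isCompact_Icc.exists_isMaxOn (nonempty_Icc.mpr hab.le)
    ((continuous_abs.comp hu.continuous).continuousOn)
  have hmax : ∀ y ∈ Icc a b, |u y| ≤ |u c₀| := fun y hy => hc₀max hy
  -- the max is positive
  have hm : 0 < |u c₀| := by
    rcases lt_or_ge 0 (|u c₀|) with h | h
    · exact h
    · exfalso
      have hz : ∀ y ∈ Icc a b, u y = 0 := fun y hy =>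
        abs_eq_zero.mp (le_antisymm (le_trans (hmax y hy) h) (abs_nonneg _))
      set d := (a + b) / 2 with hddef
      have hd : d ∈ Ioo a b := ⟨by simp [hddef]; linarith, by simp [hddef]; linarith⟩
      have hud0 : u d = 0 := hz d ⟨hd.1.le, hd.2.le⟩
      have hud' : deriv u d = 0 := by
        have hev : u =ᶠ[nhds d] (fun _ => (0:ℝ)) := by
          filter_upwards [Ioo_mem_nhds hd.1 hd.2] with x hx
          exact hz x ⟨hx.1.le, hx.2.le⟩
        rw [hev.deriv_eq, deriv_const]
      exact bb_simple V u hVb hVc hu hode h0' (by linarith [hd.1] : (0:ℝ) ≤ d) hud0 hud'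
  -- c₀ is interior
  have hc₀ab : c₀ ∈ Ioo a b := by
    rcases hc₀K.1.lt_or_eq with h1 | h1
    · rcases hc₀K.2.lt_or_eq with h2 | h2
      · exact ⟨h1, h2⟩
      · exfalso; rw [h2, hub] at hm; simp at hm
    · exfalso; rw [← h1, hua] at hm; simp at hm
  have hc₀0 : (0:ℝ) ≤ c₀ := le_trans ha hc₀K.1
  -- derivative vanishes at the interior max
  have hder0 : deriv u c₀ = 0 := by
    have hloc : IsLocalMax (fun x => (u x) ^ 2) c₀ := by
      filter_upwards [Icc_mem_nhds hc₀ab.1 hc₀ab.2] with x hx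
      have := hmax x hx
      calc (u x) ^ 2 = |u x| ^ 2 := (sq_abs _).symm
        _ ≤ |u c₀| ^ 2 := by nlinarith [abs_nonneg (u x)]
        _ = (u c₀) ^ 2 := sq_abs _
    have hD : HasDerivAt (fun x => (u x) ^ 2)
        ((2:ℕ) * (u c₀) ^ 1 * deriv u c₀) c₀ := (hud c₀).hasDerivAt.pow 2
    have := hloc.hasDerivAt_eq_zero hD
    have huc₀ : u c₀ ≠ 0 := fun h => by rw [h] at hm; simp at hm
    rcases mul_eq_zero.mp this with h | h
    · exfalso
      rcases mul_eq_zero.mp h with h' | h'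
      · simp at h'
      · exact huc₀ (by simpa using h')
    · exact h
  -- representation: u c₀ = ∫ a..c₀ (a - s) (V u)
  have hrep := bb_rep V u hVc hu hode hc₀0 ha
  rw [hua, hder0] at hrep
  have hrep2 : u c₀ = -∫ s in c₀..a, (a - s) * (V s * u s) := by linarith [hrep]
  have hrep3 : u c₀ = ∫ s in a..c₀, (a - s) * (V s * u s) := by
    rw [hrep2, intervalIntegral.integral_symm, neg_neg]
  -- bound
  have hkey : |u c₀| ≤ |u c₀| * ∫ s in a..c₀, s * |V s| := by
    calc |u c₀| = |∫ s in a..c₀, (a - s) * (V s * u s)| := by rw [← hrep3]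
      _ ≤ ∫ s in a..c₀, |(a - s) * (V s * u s)| :=
          intervalIntegral.abs_integral_le_integral_abs hc₀ab.1.le
      _ ≤ ∫ s in a..c₀, |u c₀| * (s * |V s|) := by
          apply intervalIntegral.integral_mono_on hc₀ab.1.le
            (((continuous_const.sub continuous_id).mul
              (hVc.mul hu.continuous)).abs.intervalIntegrable _ _)
            ((continuous_const.mul (continuous_id.mul hVc.abs)).intervalIntegrable _ _)
          intro s hs
          simp only [Pi.mul_apply, Pi.sub_apply, id_eq]
          rw [abs_mul, abs_mul]
          have h1 : |a - s| ≤ s := by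
            rw [abs_sub_comm, abs_of_nonneg (by linarith [hs.1])]
            linarith
          have h2 : |u s| ≤ |u c₀| := hmax s ⟨hs.1, le_trans hs.2 hc₀ab.2.le⟩
          have h3 : (0:ℝ) ≤ s := le_trans ha hs.1
          calc |a - s| * (|V s| * |u s|) ≤ s * (|V s| * |u c₀|) := by
                apply mul_le_mul h1 _ (by positivity) h3
                exact mul_le_mul_of_nonneg_left h2 (abs_nonneg _)
            _ = |u c₀| * (s * |V s|) := by ring
      _ = |u c₀| * ∫ s in a..c₀, s * |V s| := intervalIntegral.integral_const_mul _ _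
  have h1 : (1:ℝ) ≤ ∫ s in a..c₀, s * |V s| := by
    rcases le_or_gt 1 (∫ s in a..c₀, s * |V s|) with h | h
    · exact h
    · nlinarith
  have h2 : (0:ℝ) ≤ ∫ s in c₀..b, s * |V s| := by
    apply intervalIntegral.integral_nonneg hc₀ab.2.le
    intro x hx
    have : (0:ℝ) ≤ x := le_trans hc₀0 hx.1
    positivity
  have h3 : (∫ s in a..c₀, s * |V s|) + ∫ s in c₀..b, s * |V s| = ∫ s in a..b, s * |V s| :=
    intervalIntegral.integral_add_adjacent_intervals
      ((continuous_id.mul hVc.abs).intervalIntegrable _ _)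
      ((continuous_id.mul hVc.abs).intervalIntegrable _ _)
  linarith

/-- **Bargmann's bound, oscillation form.** Let `V ≤ 0` on `[0,∞)` be bounded
and continuous with `∫₀^∞ x|V(x)| dx < ∞`, and let `u` solve `−u″ + Vu = 0` on `[0,∞)` with
`u(0) = 0`, `u′(0) = 1`. Then the set of zeros of `u` in `(0,∞)` is finite, and its
cardinality is at most `∫₀^∞ x|V(x)| dx`. -/
theorem bargmann_bound (V : ℝ → ℝ) (hVb : ∃ M, ∀ x, |V x| ≤ M) (hVc : Continuous V)
    (hVneg : ∀ x, 0 ≤ x → V x ≤ 0)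
    (hVint : IntegrableOn (fun x => x * |V x|) (Ioi (0 : ℝ)))
    (u : ℝ → ℝ) (hu : ContDiff ℝ 2 u)
    (hode : ∀ x ∈ Ici (0 : ℝ), deriv (deriv u) x = V x * u x)
    (h0 : u 0 = 0) (h0' : deriv u 0 = 1) :
    {x ∈ Ioi (0 : ℝ) | u x = 0}.Finite ∧
    ({x ∈ Ioi (0 : ℝ) | u x = 0}.ncard : ℝ) ≤ ∫ x in Ioi (0 : ℝ), x * |V x| := by
  set T := {x ∈ Ioi (0:ℝ) | u x = 0} with hTdef
  set I := ∫ x in Ioi (0:ℝ), x * |V x| with hIdef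
  have hI0 : 0 ≤ I :=
    setIntegral_nonneg measurableSet_Ioi
      (fun x hx => mul_nonneg (le_of_lt hx) (abs_nonneg _))
  -- any finite subset of the zero set has cardinality at most I
  have hclaim : ∀ F : Finset ℝ, ↑F ⊆ T → (F.card : ℝ) ≤ I := by
    intro F hF
    set n := F.card with hn
    set l := F.sort (· ≤ ·) with hl
    have hlen : l.length = n := Finset.length_sort _
    have hsorted : List.Pairwise (· < ·) l := (Finset.sortedLT_sort F).pairwise
    have hmem : ∀ k (h : k < n), l.get ⟨k, by rw [hlen]; exact h⟩ ∈ T := by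
      intro k h
      exact hF ((Finset.mem_sort (α := ℝ) (· ≤ ·)).mp (List.get_mem l _))
    set aseq : ℕ → ℝ := fun k =>
      if h : 1 ≤ k ∧ k ≤ n then l.get ⟨k-1, by rw [hlen]; omega⟩ else 0 with haseq
    have ha0 : aseq 0 = 0 := by simp [haseq]
    have haT : ∀ k, 1 ≤ k → k ≤ n → aseq k ∈ T := by
      intro k h1 h2
      rw [haseq]
      simp only [h1, h2, and_self, dif_pos]
      exact hmem (k-1) (by omega)
    have hanonneg : ∀ k, k ≤ n → 0 ≤ aseq k := by
      intro k hk
      rcases Nat.eq_zero_or_pos k with h | h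
      · rw [h, ha0]
      · exact le_of_lt (haT k h hk).1
    have hzero : ∀ k, k ≤ n → u (aseq k) = 0 := by
      intro k hk
      rcases Nat.eq_zero_or_pos k with h | h
      · rw [h, ha0]; exact h0
      · exact (haT k h hk).2
    have hmono : ∀ k, k < n → aseq k < aseq (k+1) := by
      intro k hk
      rcases Nat.eq_zero_or_pos k with h | h
      · rw [h, ha0]
        exact (haT 1 le_rfl (by omega)).1
      · rw [haseq]
        simp only [h, hk, Nat.le_of_lt_succ, dif_pos, and_true]
        have h1 : 1 ≤ k ∧ k ≤ n := ⟨h, hk.le⟩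
        have h2 : 1 ≤ k + 1 ∧ k + 1 ≤ n := ⟨by omega, by omega⟩
        rw [dif_pos h1, dif_pos h2]
        exact hsorted.rel_get_of_lt (by simp [Fin.lt_def]; omega)
    have hone : ∀ k ∈ Finset.range n, (1:ℝ) ≤ ∫ s in aseq k..aseq (k+1), s * |V s| := by
      intro k hk
      rw [Finset.mem_range] at hk
      exact bb_key V u hVb hVc hu hode h0' (hanonneg k hk.le) (hmono k hk)
        (hzero k hk.le) (hzero (k+1) hk)
    have hint : ∀ k, k < n → IntervalIntegrable (fun s => s * |V s|) volume
        (aseq k) (aseq (k+1)) := fun k _ =>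
      (continuous_id.mul hVc.abs).intervalIntegrable _ _
    have hsum := intervalIntegral.sum_integral_adjacent_intervals
      (f := fun s => s * |V s|) (μ := volume) (a := aseq) (n := n) hint
    have hstep : (n:ℝ) ≤ ∫ s in (aseq 0)..(aseq n), s * |V s| := by
      rw [← hsum]
      calc (n:ℝ) = ∑ _k ∈ Finset.range n, (1:ℝ) := by simp
        _ ≤ ∑ k ∈ Finset.range n, ∫ s in aseq k..aseq (k+1), s * |V s| :=
            Finset.sum_le_sum hone
    have hlast : (∫ s in (aseq 0)..(aseq n), s * |V s|) ≤ I := by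
      rw [ha0, intervalIntegral.integral_of_le (hanonneg n le_rfl)]
      apply setIntegral_mono_set hVint
      · exact (ae_restrict_iff' measurableSet_Ioi).mpr
          (ae_of_all _ (fun x hx => mul_nonneg (le_of_lt hx) (abs_nonneg _)))
      · exact HasSubset.Subset.eventuallyLE Ioc_subset_Ioi_self
    linarith
  have hfin : T.Finite := by
    by_contra hinf
    have hinf' : T.Infinite := hinf
    obtain ⟨S, hSsub, hSfin, hScard⟩ := hinf'.exists_subset_ncard_eq (⌈I⌉₊ + 1)
    have h1 := hclaim hSfin.toFinset (by rw [Set.Finite.coe_toFinset]; exact hSsub)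
    rw [← Set.ncard_eq_toFinset_card S hSfin, hScard] at h1
    have h2 : I < ((⌈I⌉₊ + 1 : ℕ) : ℝ) := by
      push_cast
      have := Nat.le_ceil I
      linarith
    linarith
  refine ⟨hfin, ?_⟩
  have h1 := hclaim hfin.toFinset (by rw [Set.Finite.coe_toFinset])
  rwa [← Set.ncard_eq_toFinset_card T hfin] at h1
end
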